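/- arXiv:1309.2982 — 4 statements merged into one kernel-verified Lean document; each statement's English description precedes it below -/
import Mathlib

section
/- No-arbitrage implies 0 is in the relative interior of attainable option prices: suppose NA$(\mathcal{P})$ holds and for every $h \in \mathbb{R}^e$, the super-hedging price of $h \cdot g$ using only dynamic trading equals $\sup_{Q \in \mathcal{M}} E_Q[h \cdot g]$ and is attained by some $H \in \mathcal{H}$ with $(H\cdot S)_T \ge h\cdot g$ $\mathcal{P}$-q.s. If additionally each $g_i$ has price 0 under every $Q \in \mathcal{Q} \ne \emptyset$, then $0$ is in the relative interior of the convex set $\{E_Q[g] : Q \in \mathcal{M}\} \subset \mathbb{R}^e$. Equivalently: there is no $h \in \mathbb{R}^e$ with $E_Q[h \cdot g] \le 0$ for all $Q \in \mathcal{M}$ and $E_{\bar Q}[h \cdot g] < 0$ for some $\bar Q \in \mathcal{M}$. -/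
open MeasureTheory

/-- No-arbitrage implies `0` lies in the relative interior of the attainable option
prices `{E_Q[g] : Q ∈ 𝓜}`; equivalently, there is no `h ∈ ℝᵉ` with
`E_Q[h·g] ≤ 0` for all `Q ∈ 𝓜` and `E_{Q̄}[h·g] < 0` for some `Q̄ ∈ 𝓜`.
Here `W` is the set of terminal gains of dynamic trading strategies (which have
zero expectation under every martingale measure `Q ∈ 𝓜`), `P` the set of models,
`hNA` is NA(𝓟), and `hsuper` is the super-hedging duality with attainment. -/
theorem stmt15 {Ω : Type*} [MeasurableSpace Ω] (e : ℕ)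
    (P M : Set (Measure Ω)) (W : Set (Ω → ℝ)) (g : Ω → Fin e → ℝ)
    (hMprob : ∀ Q ∈ M, IsProbabilityMeasure Q)
    (hdom : ∀ Q ∈ M, ∃ p ∈ P, Q ≪ p)
    (hgint : ∀ Q ∈ M, ∀ i : Fin e, Integrable (fun ω => g ω i) Q)
    (hWint : ∀ w ∈ W, ∀ Q ∈ M, Integrable w Q)
    (hmart : ∀ w ∈ W, ∀ Q ∈ M, ∫ ω, w ω ∂Q = 0)
    (hQne : ∃ Q ∈ M, ∀ i : Fin e, ∫ ω, g ω i ∂Q = 0)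
    (hNA : ∀ w ∈ W, ∀ h : Fin e → ℝ,
      (∀ p ∈ P, ∀ᵐ ω ∂p, 0 ≤ w ω + ∑ i, h i * g ω i) →
      (∀ p ∈ P, ∀ᵐ ω ∂p, w ω + ∑ i, h i * g ω i = 0))
    (hsuper : ∀ h : Fin e → ℝ,
      (∀ Q ∈ M, ∫ ω, (∑ i, h i * g ω i) ∂Q ≤ 0) →
      ∃ w ∈ W, ∀ p ∈ P, ∀ᵐ ω ∂p, (∑ i, h i * g ω i) ≤ w ω) :
    ¬∃ h : Fin e → ℝ,
      (∀ Q ∈ M, ∫ ω, (∑ i, h i * g ω i) ∂Q ≤ 0) ∧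
      ∃ Qb ∈ M, ∫ ω, (∑ i, h i * g ω i) ∂Qb < 0 := by
  rintro ⟨h, hle, Qb, hQbM, hneg⟩
  obtain ⟨w, hwW, hw⟩ := hsuper h hle
  have hNA' := hNA w hwW (fun i => -h i) (by
    intro p hp
    filter_upwards [hw p hp] with ω hω
    have : ∑ i, -h i * g ω i = -∑ i, h i * g ω i := by
      simp [neg_mul]
    linarith [this])
  obtain ⟨p, hpP, hac⟩ := hdom Qb hQbM
  have heq : ∀ᵐ ω ∂Qb, (∑ i, h i * g ω i) = w ω := by
    filter_upwards [(hNA' p hpP).filter_mono hac.ae_le] with ω hω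
    have : ∑ i, -h i * g ω i = -∑ i, h i * g ω i := by
      simp [neg_mul]
    linarith [hω, this]
  have : ∫ ω, (∑ i, h i * g ω i) ∂Qb = ∫ ω, w ω ∂Qb :=
    integral_congr_ae heq
  rw [this, hmart w hwW Qb hQbM] at hneg
  exact lt_irrefl 0 hneg
end

section
/- In a finite path-space model where $\mathcal{P}$ is all probability measures on $\Omega' \subset \Omega$ finite, the super-hedging price under stopping-time-independent strategies equals the super-hedging price of the lookback option: $\tilde\pi(\Phi) := \inf\{x : \exists (H,h), \ x + (H\cdot S)_T + h\cdot g \ge \Phi_\tau \text{ on } \Omega' \ \forall \tau \in \mathcal{T}\}$ satisfies $\tilde\pi(\Phi) = \inf\{x : \exists (H,h), \ x + (H\cdot S)_T + h\cdot g \ge \max_{t \le T} \Phi_t \text{ on } \Omega'\}$. -/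
/-- A dynamic trading strategy adapted on the path set `A`:
`H t` depends only on the path up to time `t`. -/
def AdaptedOn (A : Set (ℕ → ℝ)) (H : ℕ → (ℕ → ℝ) → ℝ) : Prop :=
  ∀ t : ℕ, ∀ s ∈ A, ∀ s' ∈ A, (∀ j, j ≤ t → s j = s' j) → H t s = H t s'

/-- A stopping time on the path set `A` with horizon `T`. -/
def IsStopOn (T : ℕ) (A : Set (ℕ → ℝ)) (τ : (ℕ → ℝ) → ℕ) : Prop :=
  (∀ s ∈ A, τ s ≤ T) ∧
  ∀ s ∈ A, ∀ s' ∈ A, (∀ j, j ≤ τ s → s j = s' j) → τ s' = τ s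

/-- The terminal gains `(H · S)_T` of dynamic trading along the path `s`. -/
noncomputable def gains (T : ℕ) (H : ℕ → (ℕ → ℝ) → ℝ) (s : ℕ → ℝ) : ℝ :=
  ∑ t ∈ Finset.range T, H t s * (s (t + 1) - s t)
/-- When the strategy may not depend on the stopping time, super-hedging the
American option `Φ` is the same as super-hedging the lookback option
`max_{t ≤ T} Φ_t`:  the prices `π̃(Φ)` agree. -/
theorem stmt16 (T e : ℕ) (Ω' : Set (ℕ → ℝ)) (hfin : Ω'.Finite) (hne : Ω'.Nonempty)
    (Φ : ℕ → (ℕ → ℝ) → ℝ) (g : (ℕ → ℝ) → Fin e → ℝ)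
    (hΦad : ∀ t : ℕ, ∀ s ∈ Ω', ∀ s' ∈ Ω', (∀ j, j ≤ t → s j = s' j) → Φ t s = Φ t s') :
    sInf {x : ℝ | ∃ (H : ℕ → (ℕ → ℝ) → ℝ) (h : Fin e → ℝ), AdaptedOn Ω' H ∧
        ∀ τ : (ℕ → ℝ) → ℕ, IsStopOn T Ω' τ →
          ∀ s ∈ Ω', Φ (τ s) s ≤ x + gains T H s + ∑ i, h i * g s i} =
    sInf {x : ℝ | ∃ (H : ℕ → (ℕ → ℝ) → ℝ) (h : Fin e → ℝ), AdaptedOn Ω' H ∧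
        ∀ s ∈ Ω',
          (Finset.range (T + 1)).sup' (by simp) (fun u => Φ u s) ≤
            x + gains T H s + ∑ i, h i * g s i} := by
  congr 1
  ext x
  simp only [Set.mem_setOf_eq]
  constructor
  · rintro ⟨H, h, hH, hτ⟩
    refine ⟨H, h, hH, fun s hs => ?_⟩
    obtain ⟨u, hu, hueq⟩ := Finset.exists_mem_eq_sup' (by simp : (Finset.range (T+1)).Nonempty)
      (fun u => Φ u s)
    rw [hueq]
    have : IsStopOn T Ω' (fun _ => u) := by
      constructor
      · intro s' _; exact Nat.lt_succ_iff.mp (Finset.mem_range.mp hu)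
      · intro _ _ _ _ _; rfl
    exact hτ (fun _ => u) this s hs
  · rintro ⟨H, h, hH, hmax⟩
    refine ⟨H, h, hH, fun τ hτ s hs => ?_⟩
    refine le_trans ?_ (hmax s hs)
    exact Finset.le_sup' (fun u => Φ u s) (Finset.mem_range.mpr (Nat.lt_succ_of_le (hτ.1 s hs)))
end

section
/- Lipschitz rate of convergence: if $\Phi$ and $g$ are Lipschitz continuous on the compact path space $\Omega$, Assumption (no-arbitrage and non-redundancy of options) holds, and the discretized option prices satisfy $|c^n| = O(2^{-n})$, then $|\underline\pi^n(\Phi) - \underline\pi(\Phi)| = O(2^{-n})$. -/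
/-- The compact path space `Ω = {1} × [a 1, b 1] × ⋯ × [a T, b T]`. -/
def pathSpace (T : ℕ) (a b : ℕ → ℝ) : Set (ℕ → ℝ) :=
  {s | s 0 = 1 ∧ ∀ i, 1 ≤ i → i ≤ T → a i ≤ s i ∧ s i ≤ b i}

/-- The dyadic discretization `Ωⁿ = Ω ∩ {0, 1/2ⁿ, 2/2ⁿ, …}^{T+1}`. -/
def gridSpace (T n : ℕ) (a b : ℕ → ℝ) : Set (ℕ → ℝ) :=
  {s ∈ pathSpace T a b | ∀ j ≤ T, ∃ k : ℕ, s j = (k : ℝ) / 2 ^ n}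

/-- The sub-hedging price of the American option `Φ` on the path set `A`,
with options `g` statically traded at prices `c`. -/
noncomputable def subPrice (T e : ℕ) (A : Set (ℕ → ℝ)) (Φ : ℕ → (ℕ → ℝ) → ℝ)
    (g : (ℕ → ℝ) → Fin e → ℝ) (c : Fin e → ℝ) : ℝ :=
  sSup {x : ℝ | ∃ (H : ℕ → (ℕ → ℝ) → ℝ) (h : Fin e → ℝ) (τ : (ℕ → ℝ) → ℕ),
    AdaptedOn A H ∧ IsStopOn T A τ ∧
    ∀ s ∈ A, x ≤ Φ (τ s) s + gains T H s + ∑ i, h i * (g s i - c i)}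
lemma dyadic_up (x : ℝ) (k m : ℕ) (hx : x = (k : ℝ) / 2 ^ m) :
    ∀ n, m ≤ n → ∃ k' : ℕ, x = (k' : ℝ) / 2 ^ n := by
  intro n hmn
  refine ⟨k * 2 ^ (n - m), ?_⟩
  have h2 : (2:ℝ) ^ n = 2 ^ m * 2 ^ (n - m) := by
    rw [← pow_add]; congr 1; omega
  rw [hx, h2]
  push_cast
  have hm : (2:ℝ) ^ m ≠ 0 := by positivity
  have hnm : (2:ℝ) ^ (n - m) ≠ 0 := by positivity
  field_simp



lemma sum_abs_mul_le {e : ℕ} (h v : Fin e → ℝ) (V : ℝ) (hv : ∀ i, |v i| ≤ V) :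
    |∑ i, h i * v i| ≤ (∑ i, |h i|) * V := by
  calc |∑ i, h i * v i| ≤ ∑ i, |h i * v i| := Finset.abs_sum_le_sum_abs _ _
    _ = ∑ i, |h i| * |v i| := by simp [abs_mul]
    _ ≤ ∑ i, |h i| * V := Finset.sum_le_sum fun i _ =>
        mul_le_mul_of_nonneg_left (hv i) (abs_nonneg _)
    _ = (∑ i, |h i|) * V := by rw [Finset.sum_mul]

lemma growth_bound (C δ D : ℝ) (hC : 0 ≤ C) (hδ : 0 < δ) (hD : 0 < D) (f : ℕ → ℝ)
    (hf0 : ∀ t, 0 ≤ f t) (T : ℕ)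
    (hrec : ∀ t < T, f t * δ ≤ C + ∑ u ∈ Finset.range t, f u * D) :
    ∀ t < T, f t ≤ C / δ * (1 + D / δ) ^ t := by
  intro t
  induction t using Nat.strong_induction_on with
  | _ t ih =>
    intro htT
    have hq : (0:ℝ) < D / δ := div_pos hD hδ
    have h1 : f t * δ ≤ C + ∑ u ∈ Finset.range t, f u * D := hrec t htT
    have h2 : ∑ u ∈ Finset.range t, f u * D ≤
        ∑ u ∈ Finset.range t, (C / δ * (1 + D / δ) ^ u) * D := by
      refine Finset.sum_le_sum fun u hu => ?_
      have := ih u (Finset.mem_range.mp hu) (lt_of_le_of_lt (Nat.le_of_lt (Finset.mem_range.mp hu)) htT)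
      exact mul_le_mul_of_nonneg_right this hD.le
    have hgeom : ∑ u ∈ Finset.range t, (1 + D / δ) ^ u = ((1 + D / δ) ^ t - 1) / (D / δ) := by
      rw [geom_sum_eq (by nlinarith : (1:ℝ) + D / δ ≠ 1)]
      ring_nf
    have h3 : ∑ u ∈ Finset.range t, (C / δ * (1 + D / δ) ^ u) * D
        = C / δ * (((1 + D / δ) ^ t - 1) / (D / δ)) * D := by
      rw [← Finset.sum_mul, ← Finset.mul_sum, hgeom]
    have h4 : C / δ * (((1 + D / δ) ^ t - 1) / (D / δ)) * D
        = C / δ * ((1 + D / δ) ^ t - 1) * δ := by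
      field_simp
    have : f t * δ ≤ (C / δ + C / δ * ((1 + D / δ) ^ t - 1)) * δ := by
      rw [add_mul]
      calc f t * δ ≤ C + ∑ u ∈ Finset.range t, (C / δ * (1 + D / δ) ^ u) * D :=
            le_trans h1 (by linarith)
        _ = C + C / δ * ((1 + D / δ) ^ t - 1) * δ := by rw [h3, h4]
        _ = C / δ * δ + C / δ * ((1 + D / δ) ^ t - 1) * δ := by
            field_simp
      
    have h5 : f t ≤ C / δ + C / δ * ((1 + D / δ) ^ t - 1) :=
      le_of_mul_le_mul_right this hδ
    calc f t ≤ C / δ + C / δ * ((1 + D / δ) ^ t - 1) := h5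
      _ = C / δ * (1 + D / δ) ^ t := by ring

noncomputable def advPath (a b : ℕ → ℝ) (T : ℕ) (H : ℕ → (ℕ → ℝ) → ℝ) (t : ℕ)
    (s : ℕ → ℝ) : ℕ → ℕ → ℝ
  | 0 => fun j => if j ≤ t then s j else a j
  | r+1 =>
      if t + r + 1 ≤ T then
        Function.update (advPath a b T H t s r) (t + r + 1)
          (if 0 ≤ H (t + r) (advPath a b T H t s r) then a (t + r + 1) else b (t + r + 1))
      else advPath a b T H t s r

lemma keyBound (T : ℕ) (a b : ℕ → ℝ) (ha0 : a 0 = 1) (hb0 : b 0 = 1)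
    (A : Set (ℕ → ℝ)) (hAP : A ⊆ pathSpace T a b)
    (hCut : ∀ s ∈ A, ∀ t : ℕ, (fun j => if j ≤ t then s j else a j) ∈ A)
    (hUpd : ∀ p ∈ A, ∀ m, 1 ≤ m → m ≤ T → ∀ x, (x = a m ∨ x = b m) →
      Function.update p m x ∈ A)
    (δ D : ℝ) (hδ : 0 < δ)
    (hδa : ∀ u < T, δ ≤ a u - a (u+1)) (hδb : ∀ u < T, δ ≤ b (u+1) - b u)
    (hD : ∀ s ∈ A, ∀ u < T, |s (u+1) - s u| ≤ D)
    (H : ℕ → (ℕ → ℝ) → ℝ) (hHad : AdaptedOn A H)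
    (C : ℝ) (hg : ∀ s ∈ A, -C ≤ gains T H s) :
    ∀ t < T, ∀ s ∈ A, |H t s| * δ ≤ C + ∑ u ∈ Finset.range t, |H u s| * D := by
  intro t htT s hsA
  set P := advPath a b T H t s with hP
  -- stability facts
  have f1 : ∀ r, ∀ j ≤ t, P r j = s j := by
    intro r
    induction r with
    | zero => intro j hj; simp [hP, advPath, hj]
    | succ r ih =>
      intro j hj
      have hne : j ≠ t + r + 1 := by omega
      by_cases hc : t + r + 1 ≤ T
      · simp only [hP, advPath, if_pos hc]
        rw [Function.update_of_ne hne]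
        exact ih j hj
      · simp only [hP, advPath, if_neg hc]; exact ih j hj
  have f2 : ∀ r, ∀ j ≤ t + r, P (r+1) j = P r j := by
    intro r j hj
    have hne : j ≠ t + r + 1 := by omega
    by_cases hc : t + r + 1 ≤ T
    · simp only [hP, advPath, if_pos hc]; rw [Function.update_of_ne hne]
    · simp only [hP, advPath, if_neg hc]
  have f2' : ∀ r r' : ℕ, r ≤ r' → ∀ j ≤ t + r, P r' j = P r j := by
    intro r r' hrr'
    induction r' with
    | zero => intro j hj; obtain rfl : r = 0 := Nat.le_zero.mp hrr'; rfl
    | succ r' ih =>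
      intro j hj
      rcases Nat.lt_or_ge r (r'+1) with hlt | hge
      · have hr : r ≤ r' := by omega
        rw [f2 r' j (by omega)]
        exact ih hr j hj
      · have : r = r' + 1 := by omega
        subst this; rfl
    
  have f3 : ∀ r, P r ∈ A := by
    intro r
    induction r with
    | zero => exact hCut s hsA t
    | succ r ih =>
      by_cases hc : t + r + 1 ≤ T
      · simp only [hP, advPath, if_pos hc]
        exact hUpd _ ih (t+r+1) (by omega) hc _ (by split <;> simp)
      · simp only [hP, advPath, if_neg hc]; exact ih
  -- bounds on coordinates
  have fcoord : ∀ r, ∀ u ≤ T, a u ≤ P r u ∧ P r u ≤ b u := by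
    intro r u huT
    have hPr := hAP (f3 r)
    rcases Nat.eq_zero_or_pos u with h0 | h1
    · subst h0
      have : P r 0 = 1 := hPr.1
      rw [this, ha0, hb0]; exact ⟨le_refl 1, le_refl 1⟩
    · exact hPr.2 u h1 huT
  have hKdef : t + (T - t) = T := by omega
  set K := T - t with hK
  -- per-term bound on the adversarial segment
  have hterm : ∀ u, t ≤ u → u < T →
      H u (P K) * (P K (u+1) - P K u) ≤ -(|H u (P (u - t))| * δ) := by
    intro u htu huT
    set r := u - t with hr
    have hu : u = t + r := by omega
    have hrK : r ≤ K := by omega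
    have hr1K : r + 1 ≤ K := by omega
    have hHPK : H u (P K) = H u (P r) :=
      hHad u (P K) (f3 K) (P r) (f3 r) (fun j hj => f2' r K hrK j (by omega))
    have hup1 : P K (u+1) = P (r+1) (u+1) := f2' (r+1) K hr1K (u+1) (by omega)
    have hcu : P K u = P r u := f2' r K hrK u (by omega)
    have hTc : t + r + 1 ≤ T := by omega
    have hchoice : P (r+1) (u+1) =
        if 0 ≤ H u (P r) then a (u+1) else b (u+1) := by
      simp only [hP, advPath, if_pos hTc]
      have : t + r + 1 = u + 1 := by omega
      rw [this, Function.update_self, ← hu]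
    have hacu : a u ≤ P r u := (fcoord r u (by omega)).1
    have hbcu : P r u ≤ b u := (fcoord r u (by omega)).2
    have hda := hδa u huT
    have hdb := hδb u huT
    rw [hHPK, hup1, hcu, hchoice]
    by_cases hsign : 0 ≤ H u (P r)
    · rw [if_pos hsign, abs_of_nonneg hsign]
      have h1 : a (u+1) - P r u ≤ -δ := by linarith
      calc H u (P r) * (a (u+1) - P r u) ≤ H u (P r) * (-δ) :=
            mul_le_mul_of_nonneg_left h1 hsign
        _ = -(H u (P r) * δ) := by ring
    · push_neg at hsign
      rw [if_neg (not_le.mpr hsign), abs_of_neg hsign]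
      have h1 : δ ≤ b (u+1) - P r u := by linarith
      calc H u (P r) * (b (u+1) - P r u) ≤ H u (P r) * δ := by
            nlinarith
        _ = -(-H u (P r) * δ) := by ring
  -- the gains along the adversarial path
  have hgainsplit : gains T H (P K) =
      (∑ u ∈ Finset.range t, H u (P K) * (P K (u+1) - P K u)) +
      (∑ u ∈ Finset.Ico t T, H u (P K) * (P K (u+1) - P K u)) := by
    rw [gains, Finset.range_eq_Ico, ← Finset.sum_Ico_consecutive _ (Nat.zero_le t) htT.le,
      ← Finset.range_eq_Ico]
  have hpiece1 : ∀ u ∈ Finset.range t,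
      H u (P K) * (P K (u+1) - P K u) = H u s * (s (u+1) - s u) := by
    intro u hu
    have hut : u < t := Finset.mem_range.mp hu
    have h1 : H u (P K) = H u s :=
      hHad u (P K) (f3 K) s hsA (fun j hj => f1 K j (by omega))
    rw [h1, f1 K (u+1) (by omega), f1 K u (by omega)]
  have hpiece2 : (∑ u ∈ Finset.Ico t T, H u (P K) * (P K (u+1) - P K u)) ≤
      -(|H t s| * δ) := by
    rw [Finset.sum_eq_sum_Ico_succ_bot htT]
    have hHt0 : H t (P 0) = H t s :=
      hHad t (P 0) (f3 0) s hsA (fun j hj => f1 0 j hj)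
    have h1 : H t (P K) * (P K (t+1) - P K t) ≤ -(|H t s| * δ) := by
      have := hterm t le_rfl htT
      simpa [hHt0] using this
    have h2 : (∑ u ∈ Finset.Ico (t+1) T, H u (P K) * (P K (u+1) - P K u)) ≤ 0 := by
      refine Finset.sum_nonpos fun u hu => ?_
      obtain ⟨hu1, hu2⟩ := Finset.mem_Ico.mp hu
      have := hterm u (by omega) hu2
      have h0 : -(|H u (P (u - t))| * δ) ≤ 0 := by
        have := abs_nonneg (H u (P (u - t)))
        nlinarith
      linarith
    linarith
  have hsum1 : (∑ u ∈ Finset.range t, H u s * (s (u+1) - s u)) ≤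
      ∑ u ∈ Finset.range t, |H u s| * D := by
    refine Finset.sum_le_sum fun u hu => ?_
    have hut : u < t := Finset.mem_range.mp hu
    have hDu := hD s hsA u (by omega)
    calc H u s * (s (u+1) - s u) ≤ |H u s * (s (u+1) - s u)| := le_abs_self _
      _ = |H u s| * |s (u+1) - s u| := abs_mul _ _
      _ ≤ |H u s| * D := mul_le_mul_of_nonneg_left hDu (abs_nonneg _)
  have hgK := hg (P K) (f3 K)
  rw [hgainsplit] at hgK
  rw [Finset.sum_congr rfl hpiece1] at hgK
  linarith

lemma uniformGap (T e : ℕ) (a b : ℕ → ℝ) (g : (ℕ → ℝ) → Fin e → ℝ)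
    (hAss : ∀ (H : ℕ → (ℕ → ℝ) → ℝ) (h : Fin e → ℝ), AdaptedOn (pathSpace T a b) H →
      h ≠ 0 → ∃ s ∈ pathSpace T a b, gains T H s + ∑ i, h i * g s i < 0)
    (N₁ : ℝ) :
    ∃ ε > (0:ℝ), ∀ H : ℕ → (ℕ → ℝ) → ℝ, AdaptedOn (pathSpace T a b) H →
      (∀ t s, |H t s| ≤ N₁) → ∀ u : Fin e → ℝ, (∑ i, |u i|) = 1 →
      ∃ s ∈ pathSpace T a b, gains T H s + ∑ i, u i * g s i ≤ -ε := by
  by_contra hcon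
  push_neg at hcon
  have hseq : ∀ k : ℕ, ∃ (H : ℕ → (ℕ → ℝ) → ℝ) (u : Fin e → ℝ),
      AdaptedOn (pathSpace T a b) H ∧ (∀ t s, |H t s| ≤ N₁) ∧ (∑ i, |u i|) = 1 ∧
      ∀ s ∈ pathSpace T a b, -(1/((k:ℝ)+1)) < gains T H s + ∑ i, u i * g s i := by
    intro k
    have hε : (0:ℝ) < 1/((k:ℝ)+1) := by positivity
    obtain ⟨H, hHad, hHb, u, hu1, hval⟩ := hcon (1/((k:ℝ)+1)) hε
    exact ⟨H, u, hHad, hHb, hu1, hval⟩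
  choose Hs us hads hbds hu1s hvals using hseq
  let 𝒰 : Ultrafilter ℕ := Ultrafilter.of Filter.atTop
  have h𝒰le : (𝒰 : Filter ℕ) ≤ Filter.atTop := Ultrafilter.of_le _
  have hlim : ∀ (x : ℕ → ℝ) (V : ℝ), (∀ k, |x k| ≤ V) →
      ∃ l : ℝ, Filter.Tendsto x 𝒰 (nhds l) := by
    intro x V hx
    have hmap : (𝒰.map x : Filter ℝ) ≤ Filter.principal (Set.Icc (-V) V) := by
      rw [Filter.le_principal_iff, Ultrafilter.mem_coe, Ultrafilter.mem_map]
      exact Filter.univ_mem' fun k => Set.mem_Icc.mpr ⟨(abs_le.mp (hx k)).1, (abs_le.mp (hx k)).2⟩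
    obtain ⟨l, _, hl⟩ := (isCompact_Icc (a := -V) (b := V)).ultrafilter_le_nhds (𝒰.map x) hmap
    exact ⟨l, hl⟩
  have hlimH : ∀ (t : ℕ) (s : ℕ → ℝ), ∃ l : ℝ,
      Filter.Tendsto (fun k => Hs k t s) 𝒰 (nhds l) :=
    fun t s => hlim _ N₁ (fun k => hbds k t s)
  have hlimu : ∀ i : Fin e, ∃ l : ℝ, Filter.Tendsto (fun k => us k i) 𝒰 (nhds l) := by
    intro i
    refine hlim _ 1 (fun k => ?_)
    calc |us k i| ≤ ∑ j, |us k j| :=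
          Finset.single_le_sum (f := fun j => |us k j|) (fun j _ => abs_nonneg _)
            (Finset.mem_univ i)
      _ = 1 := hu1s k
  choose Hb hHb using fun p : ℕ × (ℕ → ℝ) => hlimH p.1 p.2
  choose ub hub using hlimu
  set HL : ℕ → (ℕ → ℝ) → ℝ := fun t s => Hb (t, s) with hHL
  have hHLt : ∀ t s, Filter.Tendsto (fun k => Hs k t s) 𝒰 (nhds (HL t s)) :=
    fun t s => hHb (t, s)
  have hadl : AdaptedOn (pathSpace T a b) HL := by
    intro t s hs s' hs' hag
    have h1 : ∀ k, Hs k t s = Hs k t s' := fun k => hads k t s hs s' hs' hag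
    have h2 : Filter.Tendsto (fun k => Hs k t s) 𝒰 (nhds (HL t s')) := by
      have := hHLt t s'
      simpa only [h1] using this
    exact tendsto_nhds_unique (hHLt t s) h2
  have hub1 : (∑ i, |ub i|) = 1 := by
    have h1 : Filter.Tendsto (fun k => ∑ i, |us k i|) 𝒰 (nhds (∑ i, |ub i|)) :=
      tendsto_finset_sum _ (fun i _ => ((hub i).abs))
    have h2 : Filter.Tendsto (fun k => ∑ i, |us k i|) 𝒰 (nhds 1) := by
      simp only [hu1s]; exact tendsto_const_nhds
    exact tendsto_nhds_unique h1 h2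
  have hubne : ub ≠ 0 := by
    intro h0
    rw [h0] at hub1
    simp at hub1
  have hge : ∀ s ∈ pathSpace T a b, 0 ≤ gains T HL s + ∑ i, ub i * g s i := by
    intro s hs
    have h1 : Filter.Tendsto (fun k => gains T (Hs k) s + ∑ i, us k i * g s i) 𝒰
        (nhds (gains T HL s + ∑ i, ub i * g s i)) := by
      refine Filter.Tendsto.add ?_ ?_
      · unfold gains
        exact tendsto_finset_sum _ (fun t _ => (hHLt t s).mul_const _)
      · exact tendsto_finset_sum _ (fun i _ => (hub i).mul_const _)
    have h2 : Filter.Tendsto (fun k : ℕ => -(1/((k:ℝ)+1))) 𝒰 (nhds 0) := by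
      have h3 : Filter.Tendsto (fun k : ℕ => -(1/((k:ℝ)+1))) Filter.atTop (nhds (-0)) :=
        (tendsto_one_div_add_atTop_nhds_zero_nat).neg
      rw [neg_zero] at h3
      exact h3.mono_left h𝒰le
    have h3 : ∀ k : ℕ, -(1/((k:ℝ)+1)) ≤ gains T (Hs k) s + ∑ i, us k i * g s i :=
      fun k => (hvals k s hs).le
    exact le_of_tendsto_of_tendsto h2 h1 (Filter.Eventually.of_forall h3)
  obtain ⟨s, hs, hlt⟩ := hAss HL ub hadl hubne
  exact absurd (hge s hs) (not_le.mpr hlt)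

set_option maxHeartbeats 2000000 in
/-- Optimal rate of convergence of the discretized sub-hedging prices:
if `Φ` and `g` are Lipschitz, the standing no-arbitrage assumptions hold, and the
discretized option prices satisfy `|cⁿ| = O(2⁻ⁿ)`, then
`|πⁿ(Φ) - π(Φ)| = O(2⁻ⁿ)`. -/
theorem stmt18 (T e : ℕ) (hT : 1 ≤ T) (a b : ℕ → ℝ)
    (ha0 : a 0 = 1) (hb0 : b 0 = 1) (haT : 0 ≤ a T)
    (hadec : ∀ i, 1 ≤ i → i ≤ T → a i < a (i - 1))
    (hbinc : ∀ i, 1 ≤ i → i ≤ T → b (i - 1) < b i)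
    (hady : ∀ i ≤ T, ∃ k m : ℕ, a i = (k : ℝ) / 2 ^ m)
    (hbdy : ∀ i ≤ T, ∃ k m : ℕ, b i = (k : ℝ) / 2 ^ m)
    (Φ : ℕ → (ℕ → ℝ) → ℝ) (g : (ℕ → ℝ) → Fin e → ℝ)
    (hΦad : ∀ t : ℕ, ∀ s s' : ℕ → ℝ, (∀ j, j ≤ t → s j = s' j) → Φ t s = Φ t s')
    (L : ℝ)
    (hΦLip : ∀ t ≤ T, ∀ s s' : ℕ → ℝ,
      |Φ t s - Φ t s'| ≤ L * (Finset.range (T + 1)).sup' (by simp) fun j => |s j - s' j|)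
    (hgLip : ∀ i : Fin e, ∀ s s' : ℕ → ℝ,
      |g s i - g s' i| ≤ L * (Finset.range (T + 1)).sup' (by simp) fun j => |s j - s' j|)
    (hNA : ∀ (H : ℕ → (ℕ → ℝ) → ℝ) (h : Fin e → ℝ), AdaptedOn (pathSpace T a b) H →
      (∀ s ∈ pathSpace T a b, 0 ≤ gains T H s + ∑ i, h i * g s i) →
      ∀ s ∈ pathSpace T a b, gains T H s + ∑ i, h i * g s i = 0)
    (hAss : ∀ (H : ℕ → (ℕ → ℝ) → ℝ) (h : Fin e → ℝ), AdaptedOn (pathSpace T a b) H →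
      h ≠ 0 → ∃ s ∈ pathSpace T a b, gains T H s + ∑ i, h i * g s i < 0)
    (c : ℕ → Fin e → ℝ) (K₀ : ℝ) (hc : ∀ n : ℕ, ‖c n‖ ≤ K₀ / 2 ^ n) :
    ∃ (K : ℝ) (n₀ : ℕ), ∀ n ≥ n₀,
      |subPrice T e (gridSpace T n a b) Φ g (c n) -
        subPrice T e (pathSpace T a b) Φ g 0| ≤ K / 2 ^ n := by
  classical
  -- monotonicity facts
  have hbmono : ∀ j ≤ T, ∀ i ≤ j, b i ≤ b j := by
    intro j
    induction j with
    | zero => intro _ i hi; obtain rfl : i = 0 := Nat.le_zero.mp hi; exact le_refl _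
    | succ j ih =>
      intro hjT i hij
      rcases Nat.lt_or_ge i (j+1) with hlt | hge
      · have h1 : b i ≤ b j := ih (by omega) i (by omega)
        have h2 : b j < b (j+1) := by
          have := hbinc (j+1) (by omega) hjT
          simpa using this
        linarith
      · have : i = j + 1 := by omega
        subst this; exact le_refl _
  have hamono : ∀ j ≤ T, ∀ i ≤ j, a j ≤ a i := by
    intro j
    induction j with
    | zero => intro _ i hi; obtain rfl : i = 0 := Nat.le_zero.mp hi; exact le_refl _
    | succ j ih =>
      intro hjT i hij
      rcases Nat.lt_or_ge i (j+1) with hlt | hge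
      · have h1 : a j ≤ a i := ih (by omega) i (by omega)
        have h2 : a (j+1) < a j := by
          have := hadec (j+1) (by omega) hjT
          simpa using this
        linarith
      · have : i = j + 1 := by omega
        subst this; exact le_refl _
  have ha_le1 : ∀ i ≤ T, a i ≤ 1 := fun i hi => by
    have := hamono i hi 0 (Nat.zero_le _); rw [ha0] at this; exact this
  have hb_ge1 : ∀ i ≤ T, 1 ≤ b i := fun i hi => by
    have := hbmono i hi 0 (Nat.zero_le _); rw [hb0] at this; exact this
  have ha_nonneg : ∀ i ≤ T, 0 ≤ a i := fun i hi => by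
    have := hamono T le_rfl i hi; linarith
  -- dyadic levels
  have hlev0 : ∀ i : ℕ, ∃ m : ℕ, ∀ n, m ≤ n → i ≤ T →
      (∃ k:ℕ, a i = (k:ℝ)/2^n) ∧ (∃ k:ℕ, b i = (k:ℝ)/2^n) := by
    intro i
    by_cases hiT : i ≤ T
    · obtain ⟨k₁, m₁, h₁⟩ := hady i hiT
      obtain ⟨k₂, m₂, h₂⟩ := hbdy i hiT
      exact ⟨max m₁ m₂, fun n hn _ =>
        ⟨dyadic_up _ k₁ m₁ h₁ n (by omega), dyadic_up _ k₂ m₂ h₂ n (by omega)⟩⟩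
    · exact ⟨0, fun n _ hiT' => absurd hiT' hiT⟩
  choose lev hlev using hlev0
  set m₀ := (Finset.range (T+1)).sup lev with hm₀def
  have hm₀ : ∀ n, m₀ ≤ n → ∀ i ≤ T,
      (∃ k:ℕ, a i = (k:ℝ)/2^n) ∧ (∃ k:ℕ, b i = (k:ℝ)/2^n) := by
    intro n hn i hiT
    refine hlev i n (le_trans ?_ hn) hiT
    exact Finset.le_sup (Finset.mem_range.mpr (by omega))
  -- gap and width constants
  have hrne : (Finset.range T).Nonempty := ⟨0, Finset.mem_range.mpr (by omega)⟩
  set δ := (Finset.range T).inf' hrne (fun u => min (a u - a (u+1)) (b (u+1) - b u)) with hδdef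
  have hδpos : 0 < δ := by
    rw [hδdef, Finset.lt_inf'_iff]
    intro u hu
    have huT : u < T := Finset.mem_range.mp hu
    have h1 : a (u+1) < a u := by
      have := hadec (u+1) (by omega) (by omega); simpa using this
    have h2 : b u < b (u+1) := by
      have := hbinc (u+1) (by omega) (by omega); simpa using this
    exact lt_min (by linarith) (by linarith)
  have hδa : ∀ u < T, δ ≤ a u - a (u+1) := fun u hu =>
    le_trans (Finset.inf'_le _ (Finset.mem_range.mpr hu)) (min_le_left _ _)
  have hδb : ∀ u < T, δ ≤ b (u+1) - b u := fun u hu =>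
    le_trans (Finset.inf'_le _ (Finset.mem_range.mpr hu)) (min_le_right _ _)
  set D := (Finset.range T).sup' hrne (fun u => b (u+1) - a (u+1)) with hDdef
  have hDpos : 0 < D := by
    have h1 : b (0+1) - a (0+1) ≤ D :=
      Finset.le_sup' (fun u => b (u+1) - a (u+1)) (Finset.mem_range.mpr (show 0 < T by omega))
    norm_num at h1
    have h2 : a 1 ≤ 1 := ha_le1 1 hT
    have h3 : 1 ≤ b 1 := hb_ge1 1 hT
    have h4 : a 1 < a 0 := by have := hadec 1 (le_refl 1) hT; simpa using this
    rw [ha0] at h4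
    linarith
  have hcoordP : ∀ s ∈ pathSpace T a b, ∀ u ≤ T, a u ≤ s u ∧ s u ≤ b u := by
    intro s hs u huT
    rcases Nat.eq_zero_or_pos u with h0 | h1
    · subst h0; rw [hs.1, ha0, hb0]; exact ⟨le_refl _, le_refl _⟩
    · exact hs.2 u h1 huT
  have hD : ∀ s ∈ pathSpace T a b, ∀ u < T, |s (u+1) - s u| ≤ D := by
    intro s hs u huT
    have h1 := hcoordP s hs (u+1) (by omega)
    have h2 := hcoordP s hs u (by omega)
    have h3 : a (u+1) ≤ a u := by
      have := hadec (u+1) (by omega) (by omega); simp at this; linarith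
    have h4 : b u ≤ b (u+1) := by
      have := hbinc (u+1) (by omega) (by omega); simp at this; linarith
    have h5 : b (u+1) - a (u+1) ≤ D :=
      Finset.le_sup' (fun u => b (u+1) - a (u+1)) (Finset.mem_range.mpr huT)
    rw [abs_le]
    constructor <;> [linarith; linarith]
  set P := pathSpace T a b with hPdef
  set one : ℕ → ℝ := fun _ => (1:ℝ) with honedef
  have hone_memP : one ∈ P := ⟨rfl, fun i h1 hiT => ⟨ha_le1 i hiT, hb_ge1 i hiT⟩⟩
  have hrne1 : (Finset.range (T+1)).Nonempty := ⟨0, by simp⟩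
  set R := (Finset.range (T+1)).sup' hrne1 (fun j => max (1 - a j) (b j - 1)) with hRdef
  have hR0 : 0 ≤ R := by
    have h1 : max (1 - a 0) (b 0 - 1) ≤ R := by
      rw [hRdef]; exact Finset.le_sup' (fun j => max (1 - a j) (b j - 1)) (by simp)
    rw [ha0, hb0] at h1
    norm_num at h1
    exact h1
  have hdev : ∀ s ∈ P, ((Finset.range (T+1)).sup' hrne1 (fun j => |s j - one j|)) ≤ R := by
    intro s hs
    refine Finset.sup'_le _ _ fun j hj => ?_
    have hjT : j ≤ T := by have := Finset.mem_range.mp hj; omega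
    have h1 := hcoordP s hs j hjT
    have h2 : max (1 - a j) (b j - 1) ≤ R := by
      rw [hRdef]; exact Finset.le_sup' (fun j => max (1 - a j) (b j - 1)) hj
    have h3 : 1 - a j ≤ max (1 - a j) (b j - 1) := le_max_left _ _
    have h4 : b j - 1 ≤ max (1 - a j) (b j - 1) := le_max_right _ _
    simp only [honedef]
    rw [abs_le]
    constructor <;> linarith
  have hL0 : 0 ≤ L := by
    have h1 := hΦLip 0 (Nat.zero_le T) one (fun _ => 2)
    have h2 : ((Finset.range (T+1)).sup' (by simp) (fun j => |one j - (fun _ => (2:ℝ)) j|)) = 1 := by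
      simp only [honedef]
      norm_num
    rw [h2] at h1
    have h3 := abs_nonneg (Φ 0 one - Φ 0 (fun _ => 2))
    linarith
  set MΦ := ((Finset.range (T+1)).sup' hrne1 (fun t => |Φ t one|)) + L * R with hMdef
  have hM : ∀ t ≤ T, ∀ s ∈ P, |Φ t s| ≤ MΦ := by
    intro t htT s hs
    have h1 := hΦLip t htT s one
    have h2 : |Φ t one| ≤ (Finset.range (T+1)).sup' hrne1 (fun t => |Φ t one|) :=
      Finset.le_sup' (fun t => |Φ t one|) (Finset.mem_range.mpr (by omega))
    have h4 : |Φ t s| ≤ |Φ t one| + |Φ t s - Φ t one| := by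
      have h5 := abs_add_le (Φ t one) (Φ t s - Φ t one)
      simpa using h5
    have h5 : |Φ t s - Φ t one| ≤ L * R :=
      le_trans h1 (mul_le_mul_of_nonneg_left (hdev s hs) hL0)
    rw [hMdef]
    linarith
  set Gm := (∑ i, |g one i|) + L * R with hGmdef
  have hGm0 : 0 ≤ Gm := add_nonneg (Finset.sum_nonneg fun i _ => abs_nonneg _)
    (mul_nonneg hL0 hR0)
  have hGm : ∀ (i : Fin e), ∀ s ∈ P, |g s i| ≤ Gm := by
    intro i s hs
    have h1 := hgLip i s one
    have h2 : |g one i| ≤ ∑ j, |g one j| :=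
      Finset.single_le_sum (f := fun j => |g one j|) (fun j _ => abs_nonneg _) (Finset.mem_univ i)
    have h4 : |g s i| ≤ |g one i| + |g s i - g one i| := by
      have h5 := abs_add_le (g one i) (g s i - g one i)
      simpa using h5
    have h5 : |g s i - g one i| ≤ L * R :=
      le_trans h1 (mul_le_mul_of_nonneg_left (hdev s hs) hL0)
    rw [hGmdef]
    linarith
  have hK₀0 : 0 ≤ K₀ := by
    have h1 := hc 0
    have h2 := norm_nonneg (c 0)
    simp at h1
    linarith
  have h2npos : ∀ n : ℕ, (0:ℝ) < 2^n := fun n => by positivity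
  have h2nge1 : ∀ n : ℕ, (1:ℝ) ≤ 2^n := by
    intro n
    have := pow_le_pow_right₀ (by norm_num : (1:ℝ) ≤ 2) (Nat.zero_le n)
    simpa using this
  have hcabs : ∀ n (i : Fin e), |c n i| ≤ K₀ / 2^n := by
    intro n i
    have h1 : ‖c n i‖ ≤ ‖c n‖ := norm_le_pi_norm (c n) i
    rw [Real.norm_eq_abs] at h1
    exact le_trans h1 (hc n)
  have hcK : ∀ n (i : Fin e), |c n i| ≤ K₀ := fun n i =>
    le_trans (hcabs n i) (div_le_self hK₀0 (h2nge1 n))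
  set G₂ := Gm + K₀ with hG₂def
  have hG₂0 : 0 ≤ G₂ := add_nonneg hGm0 hK₀0
  set ϕ₀ := Φ 0 one with hϕ₀def
  have hϕ₀M : ϕ₀ ≤ MΦ := le_trans (le_abs_self _) (hM 0 (Nat.zero_le T) one hone_memP)
  set C₀ := MΦ + 1 - ϕ₀ with hC₀def
  have hC₀1 : 1 ≤ C₀ := by rw [hC₀def]; linarith
  set E := (1 + D/δ)^T / δ with hEdef
  have hE0 : 0 < E := by
    have h1 : 0 < 1 + D/δ := by
      have := div_pos hDpos hδpos
      linarith
    exact div_pos (pow_pos h1 T) hδpos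
  have hHbound : ∀ (A : Set (ℕ → ℝ)), A ⊆ P →
      (∀ s ∈ A, ∀ t : ℕ, (fun j => if j ≤ t then s j else a j) ∈ A) →
      (∀ p ∈ A, ∀ m, 1 ≤ m → m ≤ T → ∀ x, (x = a m ∨ x = b m) → Function.update p m x ∈ A) →
      ∀ (H : ℕ → (ℕ → ℝ) → ℝ) (C : ℝ), 0 ≤ C → AdaptedOn A H →
      (∀ s ∈ A, -C ≤ gains T H s) → ∀ t < T, ∀ s ∈ A, |H t s| ≤ C * E := by
    intro A hsub hcut hupd H C hC hadap hgn t htT s hsA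
    have h1 := keyBound T a b ha0 hb0 A hsub hcut hupd δ D hδpos hδa hδb
      (fun s hs u hu => hD s (hsub hs) u hu) H hadap C hgn
    have h2 := growth_bound C δ D hC hδpos hDpos (fun u => |H u s|) (fun u => abs_nonneg _)
      T (fun t' ht' => h1 t' ht' s hsA) t htT
    calc |H t s| ≤ C/δ * (1 + D/δ)^t := h2
      _ ≤ C/δ * (1 + D/δ)^T := by
          apply mul_le_mul_of_nonneg_left _ (div_nonneg hC hδpos.le)
          apply pow_le_pow_right₀ _ htT.le
          have := div_pos hDpos hδpos
          linarith
      _ = C * E := by rw [hEdef]; ring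
  set N₁ := (C₀ + G₂) * E with hN₁def
  have hN₁0 : 0 ≤ N₁ := mul_nonneg (by linarith) hE0.le
  obtain ⟨ε, hε, hgap⟩ := uniformGap T e a b g hAss N₁
  set N := max 1 (4*C₀/ε) with hNdef
  have hN1 : 1 ≤ N := le_max_left _ _
  have hNC₀ : C₀ / N ≤ ε/4 := by
    have h1 : 4*C₀/ε ≤ N := le_max_right _ _
    have h2 : 0 < 4*C₀/ε := div_pos (by linarith) hε
    have hC₀ne : C₀ ≠ 0 := by linarith
    calc C₀/N ≤ C₀/(4*C₀/ε) := div_le_div_of_nonneg_left (by linarith) h2 h1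
      _ = ε/4 := by
          have hεne : ε ≠ 0 := ne_of_gt hε
          field_simp
  set C₂ := C₀ + N*G₂ with hC₂def
  have hC₂0 : 0 ≤ C₂ := by
    have := mul_nonneg (by linarith : (0:ℝ) ≤ N) hG₂0
    rw [hC₂def]; linarith
  set N₂ := C₂ * E with hN₂def
  have hN₂0 : 0 ≤ N₂ := mul_nonneg hC₂0 hE0.le
  set C₁ := K₀ + 2*(T:ℝ)*N₁ + L with hC₁def
  have hC₁0 : 0 ≤ C₁ := by
    have hT0 : (0:ℝ) ≤ (T:ℝ) := Nat.cast_nonneg T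
    have := mul_nonneg (mul_nonneg (by norm_num : (0:ℝ) ≤ 2) hT0) hN₁0
    rw [hC₁def]; linarith
  have hn₁ex : ∃ n₁ : ℕ, ∀ n ≥ n₁, C₁/2^n ≤ ε/4 := by
    have h1 : Filter.Tendsto (fun n : ℕ => ((1:ℝ)/2)^n) Filter.atTop (nhds 0) :=
      tendsto_pow_atTop_nhds_zero_of_lt_one (by norm_num) (by norm_num)
    have h2 := h1.const_mul C₁
    rw [mul_zero] at h2
    have h3 : (fun n : ℕ => C₁/2^n) = fun n : ℕ => C₁ * ((1:ℝ)/2)^n := by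
      funext n
      rw [div_pow, one_pow, mul_one_div]
    have h4 : Filter.Tendsto (fun n : ℕ => C₁/2^n) Filter.atTop (nhds 0) := by
      rw [h3]; exact h2
    have h5 : ∀ᶠ n in Filter.atTop, C₁/2^n < ε/4 :=
      h4.eventually (gt_mem_nhds (by positivity))
    obtain ⟨n₁, hn₁⟩ := Filter.eventually_atTop.mp h5
    exact ⟨n₁, fun n hn => (hn₁ n hn).le⟩
  obtain ⟨n₁, hn₁⟩ := hn₁ex
  set KK := L + 2*(T:ℝ)*N₂ + N*L + N*K₀ with hKKdef
  refine ⟨max (N*K₀) KK, max m₀ n₁, ?_⟩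
  intro n hn
  have hnm₀ : m₀ ≤ n := le_trans (le_max_left _ _) hn
  have hnn₁ : n₁ ≤ n := le_trans (le_max_right _ _) hn
  set Gn := gridSpace T n a b with hGndef
  have hdya : ∀ i ≤ T, ∃ k:ℕ, a i = (k:ℝ)/2^n := fun i hi => (hm₀ n hnm₀ i hi).1
  have hdyb : ∀ i ≤ T, ∃ k:ℕ, b i = (k:ℝ)/2^n := fun i hi => (hm₀ n hnm₀ i hi).2
  have hGsubP : Gn ⊆ P := fun s hs => hs.1
  have h1dy : ∃ k:ℕ, (1:ℝ) = (k:ℝ)/2^n := ⟨2^n, by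
    push_cast
    rw [div_self (ne_of_gt (h2npos n))]⟩
  have hone_memG : one ∈ Gn := ⟨hone_memP, fun j hj => by
    simpa only [honedef] using h1dy⟩
  have hCutP : ∀ s ∈ P, ∀ t : ℕ, (fun j => if j ≤ t then s j else a j) ∈ P := by
    intro s hs t
    constructor
    · simp only [if_pos (Nat.zero_le t)]
      exact hs.1
    · intro i h1 hiT
      by_cases hit : i ≤ t
      · simp only [if_pos hit]
        exact hs.2 i h1 hiT
      · simp only [if_neg hit]
        exact ⟨le_refl _, le_trans (ha_le1 i hiT) (hb_ge1 i hiT)⟩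
  have hCutG : ∀ s ∈ Gn, ∀ t : ℕ, (fun j => if j ≤ t then s j else a j) ∈ Gn := by
    intro s hs t
    refine ⟨hCutP s (hGsubP hs) t, fun j hj => ?_⟩
    by_cases hjt : j ≤ t
    · simp only [if_pos hjt]
      exact hs.2 j hj
    · simp only [if_neg hjt]
      exact hdya j hj
  have hUpdP : ∀ p ∈ P, ∀ m : ℕ, 1 ≤ m → m ≤ T → ∀ x : ℝ, (x = a m ∨ x = b m) →
      Function.update p m x ∈ P := by
    intro p hp m h1m hmT x hx
    constructor
    · rw [Function.update_of_ne (by omega : (0:ℕ) ≠ m)]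
      exact hp.1
    · intro i hi1 hiT
      by_cases him : i = m
      · subst him
        rw [Function.update_self]
        rcases hx with rfl | rfl
        · exact ⟨le_refl _, le_trans (ha_le1 i hiT) (hb_ge1 i hiT)⟩
        · exact ⟨le_trans (ha_le1 i hiT) (hb_ge1 i hiT), le_refl _⟩
      · rw [Function.update_of_ne him]
        exact hp.2 i hi1 hiT
  have hUpdG : ∀ p ∈ Gn, ∀ m : ℕ, 1 ≤ m → m ≤ T → ∀ x : ℝ, (x = a m ∨ x = b m) →
      Function.update p m x ∈ Gn := by
    intro p hp m h1m hmT x hx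
    refine ⟨hUpdP p (hGsubP hp) m h1m hmT x hx, fun j hj => ?_⟩
    by_cases hjm : j = m
    · subst hjm
      rw [Function.update_self]
      rcases hx with rfl | rfl
      · exact hdya j hj
      · exact hdyb j hj
    · rw [Function.update_of_ne hjm]
      exact hp.2 j hj
  set φ : (ℕ → ℝ) → (ℕ → ℝ) := fun s j => if j = 0 then 1 else (⌊(2^n : ℝ) * s j⌋ : ℝ)/2^n
    with hφdef
  have hφag : ∀ (s s' : ℕ → ℝ) (t : ℕ), (∀ j, j ≤ t → s j = s' j) →
      ∀ j, j ≤ t → φ s j = φ s' j := by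
    intro s s' t hag j hj
    simp only [hφdef]
    rw [hag j hj]
  have hφmem : ∀ s ∈ P, φ s ∈ Gn := by
    intro s hs
    refine ⟨⟨by simp [hφdef], fun i h1 hiT => ?_⟩, fun j hjT => ?_⟩
    · obtain ⟨k, hk⟩ := hdya i hiT
      have hne : i ≠ 0 := by omega
      simp only [hφdef, if_neg hne]
      have hcoord := hcoordP s hs i hiT
      constructor
      · have h2 : (k:ℝ) ≤ 2^n * s i := by
          have h3 : (k:ℝ)/2^n ≤ s i := hk ▸ hcoord.1
          rw [div_le_iff₀ (h2npos n)] at h3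
          linarith
        have h3 : (k:ℤ) ≤ ⌊(2^n:ℝ) * s i⌋ := Int.le_floor.mpr (by exact_mod_cast h2)
        rw [hk]
        exact (div_le_div_iff_of_pos_right (h2npos n)).mpr (by exact_mod_cast h3)
      · have h4 : ((⌊(2^n:ℝ) * s i⌋:ℝ)) ≤ 2^n * s i := Int.floor_le _
        have h5 : (⌊(2^n:ℝ) * s i⌋:ℝ)/2^n ≤ (2^n * s i)/2^n :=
          (div_le_div_iff_of_pos_right (h2npos n)).mpr h4
        rw [mul_div_cancel_left₀ _ (ne_of_gt (h2npos n))] at h5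
        exact le_trans h5 hcoord.2
    · by_cases hj0 : j = 0
      · subst hj0
        simp only [hφdef, if_pos rfl]
        exact h1dy
      · simp only [hφdef, if_neg hj0]
        have h0 : (0:ℝ) ≤ 2^n * s j := by
          have h1 := (hcoordP s hs j hjT).1
          have h2 := ha_nonneg j hjT
          exact mul_nonneg (h2npos n).le (by linarith)
        have h1 : (0:ℤ) ≤ ⌊(2^n:ℝ) * s j⌋ := Int.le_floor.mpr (by simpa using h0)
        refine ⟨⌊(2^n:ℝ) * s j⌋.toNat, ?_⟩
        have h2 : ((⌊(2^n:ℝ) * s j⌋.toNat : ℕ):ℝ) = ((⌊(2^n:ℝ) * s j⌋ : ℤ):ℝ) := by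
          exact_mod_cast congrArg (fun z : ℤ => (z:ℝ)) (Int.toNat_of_nonneg h1)
        rw [h2]
  have hφdev : ∀ s ∈ P, ∀ j ≤ T, |φ s j - s j| ≤ 1/2^n := by
    intro s hs j hjT
    by_cases hj0 : j = 0
    · subst hj0
      simp only [hφdef, if_pos rfl, hs.1]
      norm_num
    · simp only [hφdef, if_neg hj0]
      have h1 : (⌊(2^n:ℝ) * s j⌋:ℝ) ≤ 2^n * s j := Int.floor_le _
      have h2 : 2^n * s j - 1 < (⌊(2^n:ℝ) * s j⌋:ℝ) := Int.sub_one_lt_floor _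
      have h3 : (⌊(2^n:ℝ) * s j⌋:ℝ)/2^n ≤ (2^n * s j)/2^n :=
        (div_le_div_iff_of_pos_right (h2npos n)).mpr h1
      have h4 : (2^n * s j - 1)/2^n ≤ (⌊(2^n:ℝ) * s j⌋:ℝ)/2^n :=
        (div_le_div_iff_of_pos_right (h2npos n)).mpr h2.le
      have h5 : (2^n * s j)/2^n = s j := mul_div_cancel_left₀ _ (ne_of_gt (h2npos n))
      have h6 : (2^n * s j - 1)/2^n = s j - 1/2^n := by
        field_simp
      rw [h5] at h3
      rw [h6] at h4
      rw [abs_le]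
      constructor
      · linarith
      · have h7 : (0:ℝ) < 1/2^n := by positivity
        linarith
  have habs_sub : ∀ x y : ℝ, |x - y| ≤ |x| + |y| := by
    intro x y
    have h := abs_add_le x (-y)
    rw [abs_neg] at h
    simpa [sub_eq_add_neg] using h
  have hmain : ∀ (A : Set (ℕ → ℝ)) (c' : Fin e → ℝ) (ψ : (ℕ → ℝ) → (ℕ → ℝ)),
      A ⊆ P →
      (∀ s ∈ A, ∀ t : ℕ, (fun j => if j ≤ t then s j else a j) ∈ A) →
      (∀ p ∈ A, ∀ m : ℕ, 1 ≤ m → m ≤ T → ∀ x : ℝ, (x = a m ∨ x = b m) →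
        Function.update p m x ∈ A) →
      (∀ s ∈ P, ψ s ∈ A) →
      (∀ (s s' : ℕ → ℝ) (t : ℕ), (∀ j, j ≤ t → s j = s' j) → ∀ j, j ≤ t → ψ s j = ψ s' j) →
      (∀ s ∈ P, ∀ j ≤ T, |ψ s j - s j| ≤ 1/2^n) →
      (∀ i, |c' i| ≤ K₀/2^n) →
      ∀ (H : ℕ → (ℕ → ℝ) → ℝ) (h : Fin e → ℝ) (τ : (ℕ → ℝ) → ℕ) (x : ℝ),
      AdaptedOn A H →
      (∀ s ∈ A, x ≤ Φ (τ s) s + gains T H s + ∑ i, h i * (g s i - c' i)) →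
      (∀ s ∈ A, τ s ≤ T) → ϕ₀ - 1 ≤ x → ∑ i, |h i| ≤ N := by
    intro A c' ψ hsub hcut hupd hψmem hψag hψdev hc' H h τ x hHad hfeas hτT hx
    by_contra hNlt
    push_neg at hNlt
    set S1 := ∑ i, |h i| with hS1def
    have hS1pos : 0 < S1 := lt_of_lt_of_le (by linarith) hNlt.le
    have hS11 : 1 ≤ S1 := le_trans hN1 hNlt.le
    have hgc : ∀ σ ∈ A, ∀ i, |g σ i - c' i| ≤ G₂ := by
      intro σ hσ i
      have h4 := hGm i σ (hsub hσ)
      have h5 := hc' i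
      have h6 : K₀/2^n ≤ K₀ := div_le_self hK₀0 (h2nge1 n)
      have h7 := habs_sub (g σ i) (c' i)
      rw [hG₂def]
      linarith
    have hglow : ∀ σ ∈ A, -(C₀ + S1 * G₂) ≤ gains T H σ := by
      intro σ hσ
      have h1 := hfeas σ hσ
      have h2 : |Φ (τ σ) σ| ≤ MΦ := hM (τ σ) (hτT σ hσ) σ (hsub hσ)
      have h3 : |∑ i, h i * (g σ i - c' i)| ≤ S1 * G₂ :=
        sum_abs_mul_le h _ G₂ (hgc σ hσ)
      have h4 := (abs_le.mp h3).2
      have h5 := (abs_le.mp h2).2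
      rw [hC₀def]
      linarith
    have hCge : (0:ℝ) ≤ C₀ + S1 * G₂ :=
      add_nonneg (by linarith) (mul_nonneg hS1pos.le hG₂0)
    have hHb := hHbound A hsub hcut hupd H (C₀ + S1*G₂) hCge hHad hglow
    have hHnorm : ∀ t < T, ∀ σ ∈ A, |H t σ / S1| ≤ N₁ := by
      intro t htT σ hσ
      have h1 : |H t σ| ≤ (C₀ + S1*G₂) * E := hHb t htT σ hσ
      rw [abs_div, abs_of_pos hS1pos, div_le_iff₀ hS1pos]
      have hkey : C₀ + S1*G₂ ≤ (C₀ + G₂)*S1 := by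
        have hq : 0 ≤ C₀*(S1-1) := mul_nonneg (by linarith) (by linarith)
        nlinarith [hq]
      calc |H t σ| ≤ (C₀ + S1*G₂) * E := h1
        _ ≤ ((C₀ + G₂)*S1)*E := mul_le_mul_of_nonneg_right hkey hE0.le
        _ = N₁ * S1 := by rw [hN₁def]; ring
    set H' : ℕ → (ℕ → ℝ) → ℝ := fun t s => if s ∈ P ∧ t < T then H t (ψ s) / S1 else 0
      with hH'def
    have hH'ad : AdaptedOn P H' := by
      intro t s hs s' hs' hag
      simp only [hH'def]
      by_cases htT : t < T
      · rw [if_pos ⟨hs, htT⟩, if_pos ⟨hs', htT⟩]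
        have h1 : H t (ψ s) = H t (ψ s') :=
          hHad t (ψ s) (hψmem s hs) (ψ s') (hψmem s' hs') (hψag s s' t hag)
        rw [h1]
      · rw [if_neg (fun hcon => htT hcon.2), if_neg (fun hcon => htT hcon.2)]
    have hH'le : ∀ t s, |H' t s| ≤ N₁ := by
      intro t s
      simp only [hH'def]
      split_ifs with hcond
      · exact hHnorm t hcond.2 (ψ s) (hψmem s hcond.1)
      · simpa using hN₁0
    set u : Fin e → ℝ := fun i => h i / S1 with hudef
    have hu1 : ∑ i, |u i| = 1 := by
      simp only [hudef, abs_div, abs_of_pos hS1pos]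
      rw [← Finset.sum_div, ← hS1def, div_self (ne_of_gt hS1pos)]
    have hval : ∀ s ∈ P, -(ε/2) ≤ gains T H' s + ∑ i, u i * g s i := by
      intro s hs
      have hψs := hψmem s hs
      have hfψ := hfeas (ψ s) hψs
      have hg1 : gains T H' s = ∑ t ∈ Finset.range T, (H t (ψ s)/S1) * (s (t+1) - s t) := by
        unfold gains
        refine Finset.sum_congr rfl fun t ht => ?_
        simp only [hH'def]
        rw [if_pos ⟨hs, Finset.mem_range.mp ht⟩]
      have hgd : |gains T H' s - gains T H (ψ s) / S1| ≤ 2*(T:ℝ)*N₁*(1/2^n) := by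
        have e1 : gains T H (ψ s) / S1
            = ∑ t ∈ Finset.range T, (H t (ψ s)/S1) * (ψ s (t+1) - ψ s t) := by
          unfold gains
          rw [Finset.sum_div]
          exact Finset.sum_congr rfl fun t _ => by ring
        rw [hg1, e1, ← Finset.sum_sub_distrib]
        calc |∑ t ∈ Finset.range T, ((H t (ψ s)/S1) * (s (t+1) - s t)
              - (H t (ψ s)/S1) * (ψ s (t+1) - ψ s t))|
            ≤ ∑ t ∈ Finset.range T, |(H t (ψ s)/S1) * (s (t+1) - s t)
              - (H t (ψ s)/S1) * (ψ s (t+1) - ψ s t)| := Finset.abs_sum_le_sum_abs _ _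
          _ ≤ ∑ _t ∈ Finset.range T, N₁ * (2*(1/2^n)) := by
              refine Finset.sum_le_sum fun t ht => ?_
              have htT : t < T := Finset.mem_range.mp ht
              have hH1 : |H t (ψ s)/S1| ≤ N₁ := hHnorm t htT (ψ s) hψs
              have hd1 : |ψ s (t+1) - s (t+1)| ≤ 1/2^n := hψdev s hs (t+1) (by omega)
              have hd2 : |ψ s t - s t| ≤ 1/2^n := hψdev s hs t (by omega)
              have he2 : (H t (ψ s)/S1) * (s (t+1) - s t)
                  - (H t (ψ s)/S1) * (ψ s (t+1) - ψ s t)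
                  = (H t (ψ s)/S1) * ((s (t+1) - ψ s (t+1)) - (s t - ψ s t)) := by ring
              rw [he2, abs_mul]
              have he3 : |(s (t+1) - ψ s (t+1)) - (s t - ψ s t)| ≤ 2*(1/2^n) := by
                have h8 := habs_sub (s (t+1) - ψ s (t+1)) (s t - ψ s t)
                rw [abs_sub_comm (s (t+1)) (ψ s (t+1)), abs_sub_comm (s t) (ψ s t)] at h8
                linarith
              exact mul_le_mul hH1 he3 (abs_nonneg _) hN₁0
          _ = 2*(T:ℝ)*N₁*(1/2^n) := by
              rw [Finset.sum_const, Finset.card_range, nsmul_eq_mul]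
              ring
      have hsup : ((Finset.range (T+1)).sup' hrne1 (fun j => |s j - ψ s j|)) ≤ 1/2^n := by
        refine Finset.sup'_le _ _ fun j hj => ?_
        have hjT : j ≤ T := by have := Finset.mem_range.mp hj; omega
        rw [abs_sub_comm]
        exact hψdev s hs j hjT
      have hgv : |∑ i, u i * (g s i - g (ψ s) i)| ≤ L*(1/2^n) := by
        have h9 : ∀ i, |g s i - g (ψ s) i| ≤ L*(1/2^n) := by
          intro i
          refine le_trans (hgLip i s (ψ s)) ?_
          exact mul_le_mul_of_nonneg_left hsup hL0
        have := sum_abs_mul_le u (fun i => g s i - g (ψ s) i) (L*(1/2^n)) h9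
        rw [hu1, one_mul] at this
        exact this
      have hf2 : x - MΦ - S1*(K₀/2^n) ≤ gains T H (ψ s) + ∑ i, h i * g (ψ s) i := by
        have h2 : |Φ (τ (ψ s)) (ψ s)| ≤ MΦ := hM _ (hτT _ hψs) _ (hsub hψs)
        have h3 : |∑ i, h i * c' i| ≤ S1 * (K₀/2^n) := sum_abs_mul_le h c' _ hc'
        have h4 : ∑ i, h i * (g (ψ s) i - c' i)
            = ∑ i, h i * g (ψ s) i - ∑ i, h i * c' i := by
          rw [← Finset.sum_sub_distrib]
          exact Finset.sum_congr rfl fun i _ => by ring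
        rw [h4] at hfψ
        have h5 := (abs_le.mp h2).2
        have h6 := (abs_le.mp h3).1
        linarith
      have hf3 : (x - MΦ)/S1 - K₀/2^n ≤ gains T H (ψ s)/S1 + ∑ i, u i * g (ψ s) i := by
        have h1 := (div_le_div_iff_of_pos_right hS1pos).mpr hf2
        have h2 : (x - MΦ - S1*(K₀/2^n))/S1 = (x - MΦ)/S1 - K₀/2^n := by
          field_simp
        have h3 : (gains T H (ψ s) + ∑ i, h i * g (ψ s) i)/S1
            = gains T H (ψ s)/S1 + ∑ i, u i * g (ψ s) i := by
          rw [add_div, Finset.sum_div]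
          congr 1
          exact Finset.sum_congr rfl fun i _ => by rw [hudef]; ring
        rw [h2, h3] at h1
        exact h1
      have h5 : -C₀ ≤ x - MΦ := by rw [hC₀def]; linarith
      have h6 : -C₀/S1 ≤ (x - MΦ)/S1 := (div_le_div_iff_of_pos_right hS1pos).mpr h5
      have h8 : C₀/S1 ≤ C₀/N :=
        div_le_div_of_nonneg_left (by linarith) (lt_of_lt_of_le (by linarith) hN1) hNlt.le
      have h9 : (∑ i, u i * g s i) - (∑ i, u i * g (ψ s) i)
          = ∑ i, u i * (g s i - g (ψ s) i) := by
        rw [← Finset.sum_sub_distrib]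
        exact Finset.sum_congr rfl fun i _ => by ring
      have h10 := (abs_le.mp hgd).1
      have h11 := (abs_le.mp hgv).1
      have hC₁split : C₁/2^n = K₀/2^n + 2*(T:ℝ)*N₁*(1/2^n) + L*(1/2^n) := by
        rw [hC₁def]
        ring
      have hC₁small := hn₁ n hnn₁
      have hnegdiv : -C₀/S1 = -(C₀/S1) := neg_div _ _
      have hεbound : -(ε/2) ≤ -(C₀/N) - C₁/2^n := by
        have := hNC₀
        linarith
      have h12 : (∑ i, u i * g s i) ≥ (∑ i, u i * g (ψ s) i) - L*(1/2^n) := by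
        have := h9 ▸ h11
        linarith
      have h13 : gains T H' s ≥ gains T H (ψ s)/S1 - 2*(T:ℝ)*N₁*(1/2^n) := by linarith
      have h14 : gains T H (ψ s)/S1 + ∑ i, u i * g (ψ s) i ≥ -(C₀/N) - K₀/2^n := by
        have := hf3
        linarith
      linarith
    obtain ⟨s₀, hs₀, hcontra⟩ := hgap H' hH'ad hH'le u hu1
    have hv := hval s₀ hs₀
    linarith
  have hzero_ad : ∀ A : Set (ℕ → ℝ), AdaptedOn A (fun _ _ => (0:ℝ)) :=
    fun A t s _ s' _ _ => rfl
  have hzero_stop : ∀ A : Set (ℕ → ℝ), IsStopOn T A (fun _ => 0) :=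
    fun A => ⟨fun s _ => Nat.zero_le T, fun _ _ _ _ _ => rfl⟩
  have hgains_zero : ∀ s : ℕ → ℝ, gains T (fun _ _ => (0:ℝ)) s = 0 := by
    intro s
    unfold gains
    simp
  have hΦ0 : ∀ s ∈ P, Φ 0 s = ϕ₀ := by
    intro s hs
    rw [hϕ₀def]
    refine hΦad 0 s one fun j hj => ?_
    obtain rfl : j = 0 := Nat.le_zero.mp hj
    rw [hs.1]
  set SG := {x : ℝ | ∃ (H : ℕ → (ℕ → ℝ) → ℝ) (h : Fin e → ℝ) (τ : (ℕ → ℝ) → ℕ),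
    AdaptedOn Gn H ∧ IsStopOn T Gn τ ∧
    ∀ s ∈ Gn, x ≤ Φ (τ s) s + gains T H s + ∑ i, h i * (g s i - c n i)} with hSGdef
  set SP := {x : ℝ | ∃ (H : ℕ → (ℕ → ℝ) → ℝ) (h : Fin e → ℝ) (τ : (ℕ → ℝ) → ℕ),
    AdaptedOn P H ∧ IsStopOn T P τ ∧
    ∀ s ∈ P, x ≤ Φ (τ s) s + gains T H s + ∑ i, h i * (g s i - (0:Fin e → ℝ) i)} with hSPdef
  have hϕ₀SG : ϕ₀ ∈ SG := by
    rw [hSGdef]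
    refine ⟨fun _ _ => 0, 0, fun _ => 0, hzero_ad Gn, hzero_stop Gn, fun s hs => ?_⟩
    rw [hgains_zero, hΦ0 s (hGsubP hs)]
    simp
  have hϕ₀SP : ϕ₀ ∈ SP := by
    rw [hSPdef]
    refine ⟨fun _ _ => 0, 0, fun _ => 0, hzero_ad P, hzero_stop P, fun s hs => ?_⟩
    rw [hgains_zero, hΦ0 s hs]
    simp
  have hid_dev : ∀ s ∈ P, ∀ j ≤ T, |(fun s : ℕ → ℝ => s) s j - s j| ≤ 1/2^n := by
    intro s _ j _
    simp
  have hc0 : ∀ i : Fin e, |(0:Fin e → ℝ) i| ≤ K₀/2^n := by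
    intro i
    simp
    positivity
  have hmainP : ∀ (H : ℕ → (ℕ → ℝ) → ℝ) (h : Fin e → ℝ) (τ : (ℕ → ℝ) → ℕ) (x : ℝ),
      AdaptedOn P H →
      (∀ s ∈ P, x ≤ Φ (τ s) s + gains T H s + ∑ i, h i * (g s i - (0:Fin e→ℝ) i)) →
      (∀ s ∈ P, τ s ≤ T) → ϕ₀ - 1 ≤ x → ∑ i, |h i| ≤ N :=
    fun H h τ x hHad hfeas => hmain P 0 (fun s => s) (fun _ hs => hs) hCutP hUpdP
      (fun s hs => hs) (fun s s' t hag j hj => hag j hj) hid_dev hc0 H h τ x hHad hfeas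
  have hmainG : ∀ (H : ℕ → (ℕ → ℝ) → ℝ) (h : Fin e → ℝ) (τ : (ℕ → ℝ) → ℕ) (x : ℝ),
      AdaptedOn Gn H →
      (∀ s ∈ Gn, x ≤ Φ (τ s) s + gains T H s + ∑ i, h i * (g s i - c n i)) →
      (∀ s ∈ Gn, τ s ≤ T) → ϕ₀ - 1 ≤ x → ∑ i, |h i| ≤ N :=
    fun H h τ x hHad hfeas => hmain Gn (c n) φ hGsubP hCutG hUpdG hφmem hφag hφdev
      (hcabs n) H h τ x hHad hfeas
  set B := max ϕ₀ (MΦ + N*G₂) with hBdef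
  have hgc' : ∀ (c' : Fin e → ℝ), (∀ i : Fin e, |c' i| ≤ K₀) →
      ∀ σ ∈ P, ∀ i, |g σ i - c' i| ≤ G₂ := by
    intro c' hc' σ hσ i
    have h4 := hGm i σ hσ
    have h7 := habs_sub (g σ i) (c' i)
    rw [hG₂def]
    linarith [hc' i]
  have hgains_one : ∀ (H : ℕ → (ℕ → ℝ) → ℝ), gains T H one = 0 := by
    intro H
    unfold gains
    apply Finset.sum_eq_zero
    intro t _
    simp [honedef]
  have hubSG : ∀ x ∈ SG, x ≤ B := by
    intro x hx
    rw [hSGdef] at hx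
    obtain ⟨H, h, τ, hHad, hstop, hfeas⟩ := hx
    by_cases hcase : ϕ₀ - 1 ≤ x
    · have hS1 := hmainG H h τ x hHad hfeas hstop.1 hcase
      have h1 := hfeas one hone_memG
      have h3 : |∑ i, h i * (g one i - c n i)| ≤ N * G₂ := by
        refine le_trans (sum_abs_mul_le h _ G₂ (hgc' (c n) (hcK n) one hone_memP)) ?_
        exact mul_le_mul_of_nonneg_right hS1 hG₂0
      have h4 : |Φ (τ one) one| ≤ MΦ := hM _ (hstop.1 one hone_memG) one hone_memP
      rw [hBdef]
      have h5 := (abs_le.mp h3).2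
      have h6 := (abs_le.mp h4).2
      rw [hgains_one H] at h1
      have h7 : x ≤ MΦ + N*G₂ := by linarith
      exact le_trans h7 (le_max_right _ _)
    · push_neg at hcase
      exact le_trans (by linarith) (le_max_left ϕ₀ (MΦ + N*G₂))
  have hubSP : ∀ x ∈ SP, x ≤ B := by
    intro x hx
    rw [hSPdef] at hx
    obtain ⟨H, h, τ, hHad, hstop, hfeas⟩ := hx
    by_cases hcase : ϕ₀ - 1 ≤ x
    · have hS1 := hmainP H h τ x hHad hfeas hstop.1 hcase
      have h1 := hfeas one hone_memP
      have h3 : |∑ i, h i * (g one i - (0:Fin e → ℝ) i)| ≤ N * G₂ := by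
        refine le_trans (sum_abs_mul_le h _ G₂ (hgc' 0 (fun i => by simpa using hK₀0) one hone_memP)) ?_
        exact mul_le_mul_of_nonneg_right hS1 hG₂0
      have h4 : |Φ (τ one) one| ≤ MΦ := hM _ (hstop.1 one hone_memP) one hone_memP
      rw [hBdef]
      have h5 := (abs_le.mp h3).2
      have h6 := (abs_le.mp h4).2
      rw [hgains_one H] at h1
      have h7 : x ≤ MΦ + N*G₂ := by linarith
      exact le_trans h7 (le_max_right _ _)
    · push_neg at hcase
      exact le_trans (by linarith) (le_max_left ϕ₀ (MΦ + N*G₂))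
  have hbddSG : BddAbove SG := ⟨B, hubSG⟩
  have hbddSP : BddAbove SP := ⟨B, hubSP⟩
  have hπnG : ϕ₀ ≤ sSup SG := le_csSup hbddSG hϕ₀SG
  have hπnP : ϕ₀ ≤ sSup SP := le_csSup hbddSP hϕ₀SP
  have hdir1 : sSup SP ≤ sSup SG + N*(K₀/2^n) := by
    refine csSup_le ⟨ϕ₀, hϕ₀SP⟩ fun x hx => ?_
    rw [hSPdef] at hx
    obtain ⟨H, h, τ, hHad, hstop, hfeas⟩ := hx
    by_cases hcase : ϕ₀ - 1 ≤ x
    · have hS1 := hmainP H h τ x hHad hfeas hstop.1 hcase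
      have hmem : x - N*(K₀/2^n) ∈ SG := by
        rw [hSGdef]
        refine ⟨H, h, τ, fun t s hs s' hs' hag => hHad t s (hGsubP hs) s' (hGsubP hs') hag,
          ⟨fun s hs => hstop.1 s (hGsubP hs),
           fun s hs s' hs' hag => hstop.2 s (hGsubP hs) s' (hGsubP hs') hag⟩,
          fun s hs => ?_⟩
        have h1 := hfeas s (hGsubP hs)
        simp only [Pi.zero_apply, sub_zero] at h1
        have h2 : |∑ i, h i * c n i| ≤ N * (K₀/2^n) := by
          refine le_trans (sum_abs_mul_le h (c n) _ (hcabs n)) ?_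
          exact mul_le_mul_of_nonneg_right hS1 (by positivity)
        have h3 : ∑ i, h i * (g s i - c n i)
            = (∑ i, h i * g s i) - ∑ i, h i * c n i := by
          rw [← Finset.sum_sub_distrib]
          exact Finset.sum_congr rfl fun i _ => by ring
        rw [h3]
        have h4 := (abs_le.mp h2).2
        linarith
      have h4 := le_csSup hbddSG hmem
      linarith
    · push_neg at hcase
      have h0 : 0 ≤ N*(K₀/2^n) := by positivity
      linarith
  have hdir2 : sSup SG ≤ sSup SP + KK*(1/2^n) := by
    refine csSup_le ⟨ϕ₀, hϕ₀SG⟩ fun x hx => ?_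
    rw [hSGdef] at hx
    obtain ⟨H, h, τ, hHad, hstop, hfeas⟩ := hx
    by_cases hcase : ϕ₀ - 1 ≤ x
    · have hS1 := hmainG H h τ x hHad hfeas hstop.1 hcase
      have hglow2 : ∀ σ ∈ Gn, -C₂ ≤ gains T H σ := by
        intro σ hσ
        have h1 := hfeas σ hσ
        have h2 : |Φ (τ σ) σ| ≤ MΦ := hM _ (hstop.1 σ hσ) σ (hGsubP hσ)
        have h3 : |∑ i, h i * (g σ i - c n i)| ≤ N * G₂ := by
          refine le_trans (sum_abs_mul_le h _ G₂ (hgc' (c n) (hcK n) σ (hGsubP hσ))) ?_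
          exact mul_le_mul_of_nonneg_right hS1 hG₂0
        rw [hC₂def, hC₀def]
        have h5 := (abs_le.mp h3).2
        have h6 := (abs_le.mp h2).2
        linarith
      have hHb2 := hHbound Gn hGsubP hCutG hUpdG H C₂ hC₂0 hHad hglow2
      have hmem : x - KK*(1/2^n) ∈ SP := by
        rw [hSPdef]
        set H' : ℕ → (ℕ → ℝ) → ℝ := fun t s => if s ∈ P ∧ t < T then H t (φ s) else 0
          with hH'def2
        refine ⟨H', h, fun s => τ (φ s), ?_, ?_, ?_⟩
        · intro t s hs s' hs' hag
          simp only [hH'def2]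
          by_cases htT : t < T
          · rw [if_pos ⟨hs, htT⟩, if_pos ⟨hs', htT⟩]
            have h1 : H t (φ s) = H t (φ s') :=
              hHad t (φ s) (hφmem s hs) (φ s') (hφmem s' hs') (hφag s s' t hag)
            rw [h1]
          · rw [if_neg (fun hcon => htT hcon.2), if_neg (fun hcon => htT hcon.2)]
        · exact ⟨fun s hs => hstop.1 (φ s) (hφmem s hs),
            fun s hs s' hs' hag => hstop.2 (φ s) (hφmem s hs) (φ s') (hφmem s' hs')
              (hφag s s' (τ (φ s)) hag)⟩
        · intro s hs
          simp only [Pi.zero_apply, sub_zero]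
          have hφs := hφmem s hs
          have hfφ := hfeas (φ s) hφs
          have hsupφ : ((Finset.range (T+1)).sup' hrne1 (fun j => |φ s j - s j|)) ≤ 1/2^n := by
            refine Finset.sup'_le _ _ fun j hj => ?_
            exact hφdev s hs j (by have := Finset.mem_range.mp hj; omega)
          have hb1 : |Φ (τ (φ s)) (φ s) - Φ (τ (φ s)) s| ≤ L*(1/2^n) := by
            refine le_trans (hΦLip (τ (φ s)) (hstop.1 (φ s) hφs) (φ s) s) ?_
            exact mul_le_mul_of_nonneg_left hsupφ hL0
          have hg1 : gains T H' s
              = ∑ t ∈ Finset.range T, H t (φ s) * (s (t+1) - s t) := by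
            unfold gains
            refine Finset.sum_congr rfl fun t ht => ?_
            simp only [hH'def2]
            rw [if_pos ⟨hs, Finset.mem_range.mp ht⟩]
          have hb2 : |(∑ t ∈ Finset.range T, H t (φ s) * (s (t+1) - s t))
              - gains T H (φ s)| ≤ 2*(T:ℝ)*N₂*(1/2^n) := by
            have e1 : gains T H (φ s)
                = ∑ t ∈ Finset.range T, H t (φ s) * (φ s (t+1) - φ s t) := rfl
            rw [e1, ← Finset.sum_sub_distrib]
            calc |∑ t ∈ Finset.range T, (H t (φ s) * (s (t+1) - s t)
                  - H t (φ s) * (φ s (t+1) - φ s t))|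
                ≤ ∑ t ∈ Finset.range T, |H t (φ s) * (s (t+1) - s t)
                  - H t (φ s) * (φ s (t+1) - φ s t)| := Finset.abs_sum_le_sum_abs _ _
              _ ≤ ∑ _t ∈ Finset.range T, N₂ * (2*(1/2^n)) := by
                  refine Finset.sum_le_sum fun t ht => ?_
                  have htT : t < T := Finset.mem_range.mp ht
                  have hH1 : |H t (φ s)| ≤ N₂ := by
                    have := hHb2 t htT (φ s) hφs
                    rw [hN₂def]
                    exact this
                  have hd1 : |φ s (t+1) - s (t+1)| ≤ 1/2^n := hφdev s hs (t+1) (by omega)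
                  have hd2 : |φ s t - s t| ≤ 1/2^n := hφdev s hs t (by omega)
                  have he2 : H t (φ s) * (s (t+1) - s t) - H t (φ s) * (φ s (t+1) - φ s t)
                      = H t (φ s) * ((s (t+1) - φ s (t+1)) - (s t - φ s t)) := by ring
                  rw [he2, abs_mul]
                  have he3 : |(s (t+1) - φ s (t+1)) - (s t - φ s t)| ≤ 2*(1/2^n) := by
                    have h8 := habs_sub (s (t+1) - φ s (t+1)) (s t - φ s t)
                    rw [abs_sub_comm (s (t+1)) (φ s (t+1)), abs_sub_comm (s t) (φ s t)] at h8
                    linarith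
                  exact mul_le_mul hH1 he3 (abs_nonneg _) hN₂0
              _ = 2*(T:ℝ)*N₂*(1/2^n) := by
                  rw [Finset.sum_const, Finset.card_range, nsmul_eq_mul]
                  ring
          have hb3 : |∑ i, h i * (g (φ s) i - g s i)| ≤ N*(L*(1/2^n)) := by
            have h9 : ∀ i, |g (φ s) i - g s i| ≤ L*(1/2^n) := by
              intro i
              refine le_trans (hgLip i (φ s) s) ?_
              exact mul_le_mul_of_nonneg_left hsupφ hL0
            refine le_trans (sum_abs_mul_le h _ (L*(1/2^n)) h9) ?_
            refine mul_le_mul_of_nonneg_right hS1 ?_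
            have h10 : (0:ℝ) ≤ 1/2^n := by positivity
            exact mul_nonneg hL0 h10
          have hb4 : |∑ i, h i * c n i| ≤ N*(K₀/2^n) := by
            refine le_trans (sum_abs_mul_le h (c n) _ (hcabs n)) ?_
            exact mul_le_mul_of_nonneg_right hS1 (by positivity)
          have hsplitφ : ∑ i, h i * (g (φ s) i - c n i)
              = (∑ i, h i * g (φ s) i) - ∑ i, h i * c n i := by
            rw [← Finset.sum_sub_distrib]
            exact Finset.sum_congr rfl fun i _ => by ring
          have hsplit2 : (∑ i, h i * g (φ s) i) - (∑ i, h i * g s i)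
              = ∑ i, h i * (g (φ s) i - g s i) := by
            rw [← Finset.sum_sub_distrib]
            exact Finset.sum_congr rfl fun i _ => by ring
          have hKKexp : KK*(1/2^n)
              = L*(1/2^n) + 2*(T:ℝ)*N₂*(1/2^n) + N*(L*(1/2^n)) + N*(K₀/2^n) := by
            rw [hKKdef]
            ring
          rw [hsplitφ] at hfφ
          rw [hg1]
          have hc1 := (abs_le.mp hb1).2
          have hc2 := (abs_le.mp hb2).1
          have hc3 := (abs_le.mp hb3).2
          have hc4 := (abs_le.mp hb4).1
          have hc5 := hsplit2 ▸ hc3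
          linarith
      have h4 := le_csSup hbddSP hmem
      linarith
    · push_neg at hcase
      have hKK0 : 0 ≤ KK := by
        rw [hKKdef]
        have h1 : (0:ℝ) ≤ (T:ℝ) := Nat.cast_nonneg T
        have h2 : (0:ℝ) ≤ N := by linarith
        nlinarith [mul_nonneg h2 hL0, mul_nonneg h2 hK₀0,
          mul_nonneg (mul_nonneg (by norm_num : (0:ℝ) ≤ 2) h1) hN₂0]
      have h0 : 0 ≤ KK*(1/2^n) := mul_nonneg hKK0 (by positivity)
      linarith
  rw [show subPrice T e Gn Φ g (c n) = sSup SG from rfl,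
      show subPrice T e P Φ g 0 = sSup SP from rfl]
  rw [abs_sub_le_iff]
  constructor
  · have h1 : KK*(1/2^n) = KK/2^n := by ring
    have h2 : KK/2^n ≤ max (N*K₀) KK / 2^n :=
      (div_le_div_iff_of_pos_right (h2npos n)).mpr (le_max_right _ _)
    linarith [hdir2]
  · have h1 : N*(K₀/2^n) = (N*K₀)/2^n := by ring
    have h2 : (N*K₀)/2^n ≤ max (N*K₀) KK / 2^n :=
      (div_le_div_iff_of_pos_right (h2npos n)).mpr (le_max_left _ _)
    linarith [hdir1]
end

section
/- Consistency of the discretized market: under the standing Assumption (for any $(H,h)$ with $h \ne 0$ there exists a path $s \in \Omega$ along which $(H\cdot S)_T + h\cdot g < 0$) and continuity of $g$, if $c^n \to 0$ then for all $n$ large enough the discretized market on $\Omega^n$ with option prices $c^n$ admits no arbitrage: there is no $(H^n, h^n) \in \mathcal{H}^n \times \mathbb{R}^e$ with $(H^n \cdot S)_T + h^n\cdot(g - c^n) \ge 0$ on all of $\Omega^n$ with strict inequality on some path. -/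
open Filter Classical in
noncomputable def ulim (U : Ultrafilter ℕ) (x : ℕ → ℝ) : ℝ :=
  if h : ∃ l, Filter.Tendsto x (U : Filter ℕ) (nhds l) then h.choose else 0

open Filter in
lemma tendsto_ulim (U : Ultrafilter ℕ) (x : ℕ → ℝ) (M : ℝ)
    (hb : ∀ᶠ n in (U : Filter ℕ), x n ∈ Set.Icc (-M) M) :
    Filter.Tendsto x (U : Filter ℕ) (nhds (ulim U x)) := by
  have hmem : Set.Icc (-M) M ∈ (Ultrafilter.map x U) := by
    rw [Ultrafilter.mem_map]; exact hb
  obtain ⟨l, _, hl⟩ := (isCompact_Icc (a := -M) (b := M)).ultrafilter_le_nhds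
    (Ultrafilter.map x U) (le_principal_iff.mpr hmem)
  have hex : ∃ l, Filter.Tendsto x (U : Filter ℕ) (nhds l) := by
    refine ⟨l, ?_⟩
    rwa [Ultrafilter.coe_map] at hl
  rw [ulim, dif_pos hex]
  exact hex.choose_spec

lemma dyadic_lift {x : ℝ} {k m n : ℕ} (h : x = (k:ℝ)/2^m) (hmn : m ≤ n) :
    ∃ k' : ℕ, x = (k':ℝ)/2^n := by
  refine ⟨k * 2^(n-m), ?_⟩
  have h2 : (2:ℝ)^n = 2^(n-m) * 2^m := by rw [← pow_add]; congr 1; omega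
  rw [h, h2]; push_cast
  rw [div_eq_div_iff (by positivity) (by positivity)]; ring


noncomputable def pgains (H : ℕ → (ℕ → ℝ) → ℝ) (t : ℕ) (s : ℕ → ℝ) : ℝ :=
  ∑ j ∈ Finset.range t, H j s * (s (j + 1) - s j)

lemma gains_eq_pgains (T : ℕ) (H : ℕ → (ℕ → ℝ) → ℝ) (s : ℕ → ℝ) :
    gains T H s = pgains H T s := rfl

lemma core (T n : ℕ) (a b : ℕ → ℝ)
    (ha0 : a 0 = 1) (hb0 : b 0 = 1) (haT : 0 ≤ a T)
    (ha_mono : ∀ i j, i ≤ j → j ≤ T → a j ≤ a i)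
    (hb_mono : ∀ i j, i ≤ j → j ≤ T → b i ≤ b j)
    (hadyn : ∀ i ≤ T, ∃ k : ℕ, a i = (k : ℝ) / 2 ^ n)
    (hbdyn : ∀ i ≤ T, ∃ k : ℕ, b i = (k : ℝ) / 2 ^ n)
    (γ K : ℝ) (hγ : 0 < γ) (hK : 0 ≤ K)
    (hγa : ∀ t, t < T → γ ≤ a t - a (t + 1))
    (hγb : ∀ t, t < T → γ ≤ b (t + 1) - b t)
    (H : ℕ → (ℕ → ℝ) → ℝ) (hHa : AdaptedOn (gridSpace T n a b) H)
    (ψ : (ℕ → ℝ) → ℝ)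
    (hSR : ∀ s ∈ gridSpace T n a b, 0 ≤ gains T H s + ψ s)
    (hψK : ∀ s ∈ gridSpace T n a b, (∀ j, s j ∈ Set.Icc 0 (b T)) → |ψ s| ≤ K) :
    (∀ t ≤ T, ∀ s ∈ gridSpace T n a b,
        -K ≤ pgains H t s ∧ K + pgains H t s ≤ K * (1 + b T / γ) ^ t) ∧
    (∀ t < T, ∀ s ∈ gridSpace T n a b, γ * |H t s| ≤ K + pgains H t s) := by
  have hbT1 : 1 ≤ b T := hb0 ▸ hb_mono 0 T (Nat.zero_le T) le_rfl
  -- coordinate bounds on grid paths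
  have hcoord : ∀ s ∈ gridSpace T n a b, ∀ j, j ≤ T → 0 ≤ s j ∧ s j ≤ b T := by
    rintro s ⟨⟨hs0, hsi⟩, -⟩ j hj
    rcases Nat.eq_zero_or_pos j with h0 | h1
    · subst h0; rw [hs0]; exact ⟨zero_le_one, hbT1⟩
    · obtain ⟨h2, h3⟩ := hsi j h1 hj
      exact ⟨le_trans (le_trans haT (ha_mono j T hj le_rfl)) h2,
        le_trans h3 (hb_mono j T hj le_rfl)⟩
  -- truncation
  have htrunc : ∀ t, t ≤ T → ∀ s ∈ gridSpace T n a b,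
      (fun j => s (min j t)) ∈ gridSpace T n a b ∧
      (∀ j, (fun j => s (min j t)) j ∈ Set.Icc (0:ℝ) (b T)) ∧
      gains T H (fun j => s (min j t)) = pgains H t s := by
    intro t ht s hs
    obtain ⟨⟨hs0, hsi⟩, hsd⟩ := hs
    have hmem : (fun j => s (min j t)) ∈ gridSpace T n a b := by
      refine ⟨⟨by simpa using hs0, ?_⟩, ?_⟩
      · intro i h1i hiT
        rcases le_or_gt i t with h | h
        · simpa [min_eq_left h] using hsi i h1i hiT
        · simp only [min_eq_right h.le]
          rcases Nat.eq_zero_or_pos t with ht0 | ht1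
          · subst ht0; rw [hs0]
            exact ⟨ha0 ▸ ha_mono 0 i (Nat.zero_le i) hiT,
              hb0 ▸ hb_mono 0 i (Nat.zero_le i) hiT⟩
          · obtain ⟨h2, h3⟩ := hsi t ht1 ht
            exact ⟨le_trans (ha_mono t i h.le hiT) h2,
              le_trans h3 (hb_mono t i h.le hiT)⟩
      · intro j hj
        exact hsd (min j t) (le_trans (min_le_right j t) ht)
    refine ⟨hmem, ?_, ?_⟩
    · intro j
      have := hcoord _ ⟨⟨hs0, hsi⟩, hsd⟩ (min j t) (le_trans (min_le_right j t) ht)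
      exact ⟨this.1, this.2⟩
    · unfold gains pgains
      rw [← Finset.sum_subset (Finset.range_subset_range.mpr ht) ?_]
      · apply Finset.sum_congr rfl
        intro j hj
        rw [Finset.mem_range] at hj
        have hH : H j (fun j' => s (min j' t)) = H j s := by
          apply hHa j _ hmem s ⟨⟨hs0, hsi⟩, hsd⟩
          intro j' hj'
          simp [min_eq_left (le_trans hj' (le_of_lt hj))]
        rw [hH]
        congr 2
        · simp [min_eq_left (Nat.succ_le_of_lt hj)]
        · simp [min_eq_left (le_of_lt hj)]
      · intro j hjT hjt
        rw [Finset.mem_range] at hjt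
        push_neg at hjt
        have h1 : min (j + 1) t = t := min_eq_right (by omega)
        have h2 : min j t = t := min_eq_right hjt
        simp only [h1, h2, sub_self, mul_zero]
  -- deviation
  have hdev : ∀ t, t < T → ∀ s ∈ gridSpace T n a b, ∀ u,
      (u = a (t + 1) ∨ u = b (t + 1)) →
      (fun j => if j ≤ t then s j else u) ∈ gridSpace T n a b ∧
      (∀ j, (fun j => if j ≤ t then s j else u) j ∈ Set.Icc (0:ℝ) (b T)) ∧
      gains T H (fun j => if j ≤ t then s j else u) =
        pgains H t s + H t s * (u - s t) := by
    intro t ht s hs u hu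
    obtain ⟨⟨hs0, hsi⟩, hsd⟩ := hs
    have ht1T : t + 1 ≤ T := ht
    have hab : a (t + 1) ≤ b (t + 1) := by
      calc a (t + 1) ≤ a 0 := ha_mono 0 (t + 1) (Nat.zero_le _) ht1T
      _ = 1 := ha0
      _ = b 0 := hb0.symm
      _ ≤ b (t + 1) := hb_mono 0 (t + 1) (Nat.zero_le _) ht1T
    have hu1 : a (t + 1) ≤ u ∧ u ≤ b (t + 1) := by
      rcases hu with h | h <;> subst h
      · exact ⟨le_rfl, hab⟩
      · exact ⟨hab, le_rfl⟩
    have hu0 : 0 ≤ u := le_trans (le_trans haT (ha_mono (t + 1) T ht1T le_rfl)) hu1.1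
    have huT : u ≤ b T := le_trans hu1.2 (hb_mono (t + 1) T ht1T le_rfl)
    have hmem : (fun j => if j ≤ t then s j else u) ∈ gridSpace T n a b := by
      refine ⟨⟨by simpa using hs0, ?_⟩, ?_⟩
      · intro i h1i hiT
        by_cases h : i ≤ t
        · simpa [h] using hsi i h1i hiT
        · push_neg at h
          simp only [if_neg (not_le.mpr h)]
          exact ⟨le_trans (ha_mono (t + 1) i h hiT) hu1.1,
            le_trans hu1.2 (hb_mono (t + 1) i h hiT)⟩
      · intro j hj
        by_cases h : j ≤ t
        · simpa [h] using hsd j hj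
        · simp only [if_neg h]
          rcases hu with h' | h'
          · exact h' ▸ hadyn (t + 1) ht1T
          · exact h' ▸ hbdyn (t + 1) ht1T
    refine ⟨hmem, ?_, ?_⟩
    · intro j
      by_cases h : j ≤ t
      · simpa [h] using hcoord _ ⟨⟨hs0, hsi⟩, hsd⟩ j (le_trans h (le_of_lt ht))
      · simp only [if_neg h]
        exact ⟨hu0, huT⟩
    · unfold gains pgains
      have hsub : Finset.range (t + 1) ⊆ Finset.range T := Finset.range_subset_range.mpr ht
      rw [← Finset.sum_subset hsub ?_]
      · rw [Finset.sum_range_succ]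
        congr 1
        · apply Finset.sum_congr rfl
          intro j hj
          rw [Finset.mem_range] at hj
          have hH : H j (fun j' => if j' ≤ t then s j' else u) = H j s := by
            apply hHa j _ hmem s ⟨⟨hs0, hsi⟩, hsd⟩
            intro j' hj'
            simp [if_pos (le_trans hj' (le_of_lt hj))]
          rw [hH]
          congr 2
          · exact if_pos (Nat.succ_le_of_lt hj)
          · simp [if_pos (le_of_lt hj)]
        · have hH : H t (fun j' => if j' ≤ t then s j' else u) = H t s := by
            apply hHa t _ hmem s ⟨⟨hs0, hsi⟩, hsd⟩
            intro j' hj'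
            simp [if_pos hj']
          rw [hH]
          congr 2
          · simp
          · simp
      · intro j hjT hjt
        rw [Finset.mem_range] at hjt
        push_neg at hjt
        have h1 : ¬ (j + 1 ≤ t) := by omega
        have h2 : ¬ (j ≤ t) := by omega
        simp only [if_neg h1, if_neg h2, sub_self, mul_zero]
  -- lower bound on partial gains
  have hlow : ∀ t, t ≤ T → ∀ s ∈ gridSpace T n a b, -K ≤ pgains H t s := by
    intro t ht s hs
    obtain ⟨hmem, hIcc, hgn⟩ := htrunc t ht s hs
    have h1 := hSR _ hmem
    have h2 := hψK _ hmem hIcc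
    rw [hgn] at h1
    have := (abs_le.mp h2).2
    linarith
  -- bound on H
  have hHb : ∀ t, t < T → ∀ s ∈ gridSpace T n a b, γ * |H t s| ≤ K + pgains H t s := by
    intro t ht s hs
    have hst : a t ≤ s t ∧ s t ≤ b t := by
      rcases Nat.eq_zero_or_pos t with h0 | h1
      · subst h0; rw [hs.1.1, ha0, hb0]; exact ⟨le_rfl, le_rfl⟩
      · exact hs.1.2 t h1 (le_of_lt ht)
    obtain ⟨hmemA, hIccA, hgA⟩ := hdev t ht s hs (a (t + 1)) (Or.inl rfl)
    obtain ⟨hmemB, hIccB, hgB⟩ := hdev t ht s hs (b (t + 1)) (Or.inr rfl)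
    have hA := hSR _ hmemA
    have hB := hSR _ hmemB
    have hψA := (abs_le.mp (hψK _ hmemA hIccA)).2
    have hψB := (abs_le.mp (hψK _ hmemB hIccB)).2
    rw [hgA] at hA
    rw [hgB] at hB
    have h1 : γ ≤ b (t + 1) - s t := le_trans (hγb t ht) (by linarith [hst.2])
    have h2 : γ ≤ s t - a (t + 1) := le_trans (hγa t ht) (by linarith [hst.1])
    rcases abs_cases (H t s) with ⟨he, hsgn⟩ | ⟨he, hsgn⟩
    · rw [he]
      nlinarith [mul_le_mul_of_nonneg_right h2 hsgn]
    · rw [he]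
      nlinarith [mul_le_mul_of_nonneg_right h1 (by linarith : 0 ≤ -H t s)]
  -- upper bound by induction
  have hup : ∀ t, t ≤ T → ∀ s ∈ gridSpace T n a b,
      K + pgains H t s ≤ K * (1 + b T / γ) ^ t := by
    intro t
    induction t with
    | zero => intro _ s _; simp [pgains]
    | succ t ih =>
      intro ht s hs
      have htT : t < T := ht
      have h1 := ih (le_of_lt htT) s hs
      have h2 := hHb t htT s hs
      have h3 := hlow t (le_of_lt htT) s hs
      have h4 : pgains H (t + 1) s = pgains H t s + H t s * (s (t + 1) - s t) :=
        Finset.sum_range_succ _ t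
      have hc1 := hcoord s hs t (le_of_lt htT)
      have hc2 := hcoord s hs (t + 1) htT
      have h5 : |s (t + 1) - s t| ≤ b T := abs_le.mpr ⟨by linarith [hc1.2, hc2.1], by linarith [hc1.1, hc2.2]⟩
      have h6 : H t s * (s (t + 1) - s t) ≤ |H t s| * b T := by
        calc H t s * (s (t + 1) - s t) ≤ |H t s * (s (t + 1) - s t)| := le_abs_self _
        _ = |H t s| * |s (t + 1) - s t| := abs_mul _ _
        _ ≤ |H t s| * b T := mul_le_mul_of_nonneg_left h5 (abs_nonneg _)
      have hbT0 : 0 ≤ b T := by linarith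
      have h7 : |H t s| * b T ≤ (K + pgains H t s) * (b T / γ) := by
        rw [← mul_div_assoc, le_div_iff₀ hγ]
        nlinarith
      calc K + pgains H (t + 1) s ≤ (K + pgains H t s) * (1 + b T / γ) := by
            rw [h4]; nlinarith
      _ ≤ K * (1 + b T / γ) ^ t * (1 + b T / γ) := by
            apply mul_le_mul_of_nonneg_right h1
            positivity
      _ = K * (1 + b T / γ) ^ (t + 1) := by ring
  exact ⟨fun t ht s hs => ⟨hlow t ht s hs, hup t ht s hs⟩, hHb⟩

noncomputable def rnd (T : ℕ) (a : ℕ → ℝ) (n : ℕ) (s : ℕ → ℝ) : ℕ → ℝ :=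
  fun j => if j = 0 then 1 else if j ≤ T then
    max (a j) ((⌊(2:ℝ) ^ n * s j⌋ : ℝ) / 2 ^ n) else s j

/-- Consistency of the discretized market: under the standing assumption (no
nontrivial semi-static position super-replicates 0 from price 0, with `h ≠ 0`)
and continuity of `g`, if `cⁿ → 0` then for all `n` large enough the discretized
market on `Ωⁿ` with option prices `cⁿ` admits no arbitrage. -/
theorem stmt19 (T e : ℕ) (hT : 1 ≤ T) (a b : ℕ → ℝ)
    (ha0 : a 0 = 1) (hb0 : b 0 = 1) (haT : 0 ≤ a T)
    (hadec : ∀ i, 1 ≤ i → i ≤ T → a i < a (i - 1))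
    (hbinc : ∀ i, 1 ≤ i → i ≤ T → b (i - 1) < b i)
    (hady : ∀ i ≤ T, ∃ k m : ℕ, a i = (k : ℝ) / 2 ^ m)
    (hbdy : ∀ i ≤ T, ∃ k m : ℕ, b i = (k : ℝ) / 2 ^ m)
    (g : (ℕ → ℝ) → Fin e → ℝ)
    (hgcont : ∀ i : Fin e, Continuous fun s : ℕ → ℝ => g s i)
    (hAss : ∀ (H : ℕ → (ℕ → ℝ) → ℝ) (h : Fin e → ℝ), AdaptedOn (pathSpace T a b) H →
      h ≠ 0 → ∃ s ∈ pathSpace T a b, gains T H s + ∑ i, h i * g s i < 0)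
    (c : ℕ → Fin e → ℝ)
    (hc : Filter.Tendsto (fun n => ‖c n‖) Filter.atTop (nhds 0)) :
    ∀ᶠ n in Filter.atTop,
      ¬∃ (H : ℕ → (ℕ → ℝ) → ℝ) (h : Fin e → ℝ),
        AdaptedOn (gridSpace T n a b) H ∧
        (∀ s ∈ gridSpace T n a b, 0 ≤ gains T H s + ∑ i, h i * (g s i - c n i)) ∧
        ∃ s ∈ gridSpace T n a b, 0 < gains T H s + ∑ i, h i * (g s i - c n i) := by
  classical
  -- monotonicity of a and b
  have ha_mono : ∀ i j : ℕ, i ≤ j → j ≤ T → a j ≤ a i := by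
    intro i j hij hjT
    induction j with
    | zero => rw [Nat.le_zero.mp hij]
    | succ j ih =>
      rcases Nat.eq_or_lt_of_le hij with h | h
      · rw [h]
      · have h1 : a (j + 1) < a j := by
          have := hadec (j + 1) (by omega) hjT
          simpa using this
        exact le_trans (le_of_lt h1) (ih (by omega) (by omega))
  have hb_mono : ∀ i j : ℕ, i ≤ j → j ≤ T → b i ≤ b j := by
    intro i j hij hjT
    induction j with
    | zero => rw [Nat.le_zero.mp hij]
    | succ j ih =>
      rcases Nat.eq_or_lt_of_le hij with h | h
      · rw [h]
      · have h1 : b j < b (j + 1) := by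
          have := hbinc (j + 1) (by omega) hjT
          simpa using this
        exact le_trans (ih (by omega) (by omega)) (le_of_lt h1)
  have hbT1 : 1 ≤ b T := hb0 ▸ hb_mono 0 T (Nat.zero_le T) le_rfl
  have hbT0 : 0 ≤ b T := by linarith
  -- common dyadic denominator
  choose ka ma hka using hady
  choose kb mb hkb using hbdy
  set m₀ := (Finset.range (T + 1)).sup
    (fun i => if h : i ≤ T then max (ma i h) (mb i h) else 0) with hm₀def
  have hm₀ : ∀ n, m₀ ≤ n →
      (∀ i ≤ T, ∃ k : ℕ, a i = (k : ℝ) / 2 ^ n) ∧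
      (∀ i ≤ T, ∃ k : ℕ, b i = (k : ℝ) / 2 ^ n) := by
    intro n hn
    have hle : ∀ i (h : i ≤ T), max (ma i h) (mb i h) ≤ n := by
      intro i h
      refine le_trans ?_ hn
      have hmem : i ∈ Finset.range (T + 1) := Finset.mem_range.mpr (by omega)
      have h2 := Finset.le_sup (f := fun i => if h : i ≤ T then max (ma i h) (mb i h) else 0) hmem
      simp only [dif_pos h] at h2
      exact h2
    constructor
    · intro i h
      exact dyadic_lift (hka i h) (le_trans (le_max_left _ _) (hle i h))
    · intro i h
      exact dyadic_lift (hkb i h) (le_trans (le_max_right _ _) (hle i h))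
  -- the gap γ
  have hTne : (Finset.range T).Nonempty := ⟨0, Finset.mem_range.mpr hT⟩
  set γ := (Finset.range T).inf' hTne (fun t => min (a t - a (t + 1)) (b (t + 1) - b t))
    with hγdef
  have hγpos : 0 < γ := by
    rw [hγdef, Finset.lt_inf'_iff]
    intro t ht
    rw [Finset.mem_range] at ht
    have h1 : a (t + 1) < a t := by simpa using hadec (t + 1) (by omega) (by omega)
    have h2 : b t < b (t + 1) := by simpa using hbinc (t + 1) (by omega) (by omega)
    exact lt_min (by linarith) (by linarith)
  have hγa : ∀ t, t < T → γ ≤ a t - a (t + 1) := fun t ht =>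
    le_trans (Finset.inf'_le _ (Finset.mem_range.mpr ht)) (min_le_left _ _)
  have hγb : ∀ t, t < T → γ ≤ b (t + 1) - b t := fun t ht =>
    le_trans (Finset.inf'_le _ (Finset.mem_range.mpr ht)) (min_le_right _ _)
  -- bound on c
  obtain ⟨C, hC⟩ : ∃ C, ∀ n, ‖c n‖ ≤ C := by
    obtain ⟨C, hC⟩ := hc.bddAbove_range
    exact ⟨C, fun n => hC (Set.mem_range_self n)⟩
  have hC0 : 0 ≤ C := le_trans (norm_nonneg _) (hC 0)
  -- compactness and the bound K
  set Ω' : Set (ℕ → ℝ) := pathSpace T a b ∩ {s | ∀ j, s j ∈ Set.Icc (0:ℝ) (b T)}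
    with hΩ'def
  have hΩclosed : IsClosed Ω' := by
    have h1 : IsClosed (pathSpace T a b) := by
      have heq : pathSpace T a b = {s : ℕ → ℝ | s 0 = 1} ∩
          ⋂ i ∈ Set.Icc 1 T, {s : ℕ → ℝ | s i ∈ Set.Icc (a i) (b i)} := by
        ext s
        simp only [pathSpace, Set.mem_setOf_eq, Set.mem_inter_iff, Set.mem_iInter,
          Set.mem_Icc, and_imp]
      rw [heq]
      exact (isClosed_eq (continuous_apply 0) continuous_const).inter
        (isClosed_biInter fun i _ => isClosed_Icc.preimage (continuous_apply i))
    have h2 : IsClosed {s : ℕ → ℝ | ∀ j, s j ∈ Set.Icc (0:ℝ) (b T)} := by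
      have heq : {s : ℕ → ℝ | ∀ j, s j ∈ Set.Icc (0:ℝ) (b T)} =
          ⋂ j, {s : ℕ → ℝ | s j ∈ Set.Icc (0:ℝ) (b T)} := by
        ext s; simp
      rw [heq]
      exact isClosed_iInter fun j => isClosed_Icc.preimage (continuous_apply j)
    exact h1.inter h2
  have hΩcomp : IsCompact Ω' := by
    apply IsCompact.of_isClosed_subset
      (isCompact_univ_pi fun _ : ℕ => isCompact_Icc (a := (0:ℝ)) (b := b T)) hΩclosed
    intro s hs
    rw [Set.mem_univ_pi]
    exact fun j => hs.2 j
  have hΩne : Ω'.Nonempty := by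
    refine ⟨fun _ => 1, ⟨⟨rfl, fun i h1 hiT => ?_⟩, fun j => ⟨zero_le_one, hbT1⟩⟩⟩
    exact ⟨ha0 ▸ ha_mono 0 i (Nat.zero_le i) hiT, hb0 ▸ hb_mono 0 i (Nat.zero_le i) hiT⟩
  obtain ⟨s₀, hs₀, hK₀⟩ := hΩcomp.exists_isMaxOn hΩne
    ((continuous_finset_sum (Finset.univ : Finset (Fin e))
        (fun i _ => (hgcont i).abs)).continuousOn :
      ContinuousOn (fun s => ∑ i : Fin e, |g s i|) Ω')
  set K := (∑ i : Fin e, |g s₀ i|) + e * C with hKdef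
  have hKnn : 0 ≤ K := by
    apply add_nonneg
    · exact Finset.sum_nonneg fun i _ => abs_nonneg _
    · positivity
  -- ψ bound
  have hψbound : ∀ (n : ℕ) (h : Fin e → ℝ), ‖h‖ ≤ 1 →
      ∀ s ∈ gridSpace T n a b, (∀ j, s j ∈ Set.Icc (0:ℝ) (b T)) →
      |∑ i, h i * (g s i - c n i)| ≤ K := by
    intro n h hh s hs hIcc
    have hs' : s ∈ Ω' := ⟨hs.1, hIcc⟩
    calc |∑ i, h i * (g s i - c n i)| ≤ ∑ i, |h i * (g s i - c n i)| :=
        Finset.abs_sum_le_sum_abs _ _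
    _ ≤ ∑ i, (|g s i| + C) := by
        apply Finset.sum_le_sum
        intro i _
        rw [abs_mul]
        have h1 : |h i| ≤ 1 := le_trans (by simpa using norm_le_pi_norm h i) hh
        have h2 : |g s i - c n i| ≤ |g s i| + C := by
          have h3 : |c n i| ≤ C := le_trans (by simpa using norm_le_pi_norm (c n) i) (hC n)
          calc |g s i - c n i| ≤ |g s i| + |c n i| := abs_sub _ _
          _ ≤ |g s i| + C := by linarith
        calc |h i| * |g s i - c n i| ≤ 1 * (|g s i| + C) :=
            mul_le_mul h1 h2 (abs_nonneg _) zero_le_one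
        _ = |g s i| + C := one_mul _
    _ = (∑ i, |g s i|) + e * C := by
        rw [Finset.sum_add_distrib, Finset.sum_const, Finset.card_univ, Fintype.card_fin,
          nsmul_eq_mul]
    _ ≤ K := by
        rw [hKdef]
        exact add_le_add (show (∑ i, |g s i|) ≤ ∑ i, |g s₀ i| from hK₀ hs') le_rfl
  -- contradiction setup
  by_contra hcon
  simp only [Filter.not_eventually, not_not] at hcon
  set P : ℕ → Prop := fun n => ∃ (H : ℕ → (ℕ → ℝ) → ℝ) (h : Fin e → ℝ),
    AdaptedOn (gridSpace T n a b) H ∧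
    (∀ s ∈ gridSpace T n a b, 0 ≤ gains T H s + ∑ i, h i * (g s i - c n i)) ∧
    ‖h‖ = 1 with hPdef
  have hPfreq : ∃ᶠ n in Filter.atTop, P n := by
    apply (hcon.and_eventually (Filter.eventually_ge_atTop m₀)).mono
    rintro n ⟨⟨H, h, hHa, hSR, st, hstmem, hstrict⟩, hm⟩
    by_cases hh0 : h = 0
    · exfalso
      have hcore := core T n a b ha0 hb0 haT ha_mono hb_mono
        (hm₀ n hm).1 (hm₀ n hm).2 γ 0 hγpos le_rfl hγa hγb H hHa
        (fun s => ∑ i, h i * (g s i - c n i)) hSR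
        (by intro s _ _; simp [hh0])
      have h1 := (hcore.1 T le_rfl st hstmem).2
      rw [gains_eq_pgains] at hstrict
      have h2 : ∑ i, h i * (g st i - c n i) = 0 := by simp [hh0]
      rw [h2] at hstrict
      simp at h1
      linarith
    · have hn0 : (0:ℝ) < ‖h‖ := norm_pos_iff.mpr hh0
      refine ⟨fun t s => ‖h‖⁻¹ * H t s, ‖h‖⁻¹ • h, ?_, ?_, ?_⟩
      · intro t s hs s' hs' hag
        show ‖h‖⁻¹ * H t s = ‖h‖⁻¹ * H t s'
        rw [hHa t s hs s' hs' hag]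
      · intro s hs
        have h1 := hSR s hs
        have h2 : gains T (fun t s => ‖h‖⁻¹ * H t s) s +
            ∑ i, (‖h‖⁻¹ • h) i * (g s i - c n i) =
            ‖h‖⁻¹ * (gains T H s + ∑ i, h i * (g s i - c n i)) := by
          unfold gains
          rw [mul_add, Finset.mul_sum, Finset.mul_sum]
          congr 1
          · apply Finset.sum_congr rfl; intro t _; ring
          · apply Finset.sum_congr rfl; intro i _
            simp [Pi.smul_apply, smul_eq_mul]; ring
        rw [h2]
        exact mul_nonneg (inv_nonneg.mpr (norm_nonneg _)) h1
      · rw [norm_smul, norm_inv, norm_norm]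
        exact inv_mul_cancel₀ (ne_of_gt hn0)
  have hne : (Filter.atTop ⊓ Filter.principal {n | P n}).NeBot :=
    Filter.frequently_iff_neBot.mp hPfreq
  set U : Ultrafilter ℕ := @Ultrafilter.of _ (Filter.atTop ⊓ Filter.principal {n | P n}) hne
    with hUdef
  have hUle : (U : Filter ℕ) ≤ Filter.atTop ⊓ Filter.principal {n | P n} :=
    Ultrafilter.of_le _
  have hUatTop : (U : Filter ℕ) ≤ Filter.atTop := hUle.trans inf_le_left
  have hUP : ∀ᶠ n in (U : Filter ℕ), P n := by
    have h1 : (U : Filter ℕ) ≤ Filter.principal {n | P n} := hUle.trans inf_le_right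
    exact h1 (Filter.mem_principal_self _)
  have hUm₀ : ∀ᶠ n in (U : Filter ℕ), m₀ ≤ n := hUatTop (Filter.eventually_ge_atTop m₀)
  have hUev : ∀ᶠ n in (U : Filter ℕ), P n ∧ m₀ ≤ n := hUP.and hUm₀
  -- choose strategies
  have hch : ∀ n : ℕ, ∃ Hh : (ℕ → (ℕ → ℝ) → ℝ) × (Fin e → ℝ), P n →
      AdaptedOn (gridSpace T n a b) Hh.1 ∧
      (∀ s ∈ gridSpace T n a b, 0 ≤ gains T Hh.1 s + ∑ i, Hh.2 i * (g s i - c n i)) ∧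
      ‖Hh.2‖ = 1 := by
    intro n
    by_cases hp : P n
    · obtain ⟨H, h, h1, h2, h3⟩ := hp
      exact ⟨(H, h), fun _ => ⟨h1, h2, h3⟩⟩
    · exact ⟨(fun _ _ => 0, 0), fun hp' => absurd hp' hp⟩
  choose Hh hHh using hch
  -- uniform bound on strategies
  set M := K * (1 + b T / γ) ^ T / γ with hMdef
  have hM : ∀ n, P n → m₀ ≤ n → ∀ t, t < T → ∀ s ∈ gridSpace T n a b,
      |(Hh n).1 t s| ≤ M := by
    intro n hp hm t ht s hs
    obtain ⟨h1, h2, h3⟩ := hHh n hp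
    have hcore := core T n a b ha0 hb0 haT ha_mono hb_mono
      (hm₀ n hm).1 (hm₀ n hm).2 γ K hγpos hKnn hγa hγb (Hh n).1 h1
      (fun s => ∑ i, (Hh n).2 i * (g s i - c n i)) h2
      (fun s hs hIcc => hψbound n (Hh n).2 (le_of_eq h3) s hs hIcc)
    have hb1 := (hcore.1 t (le_of_lt ht) s hs).2
    have hb2 := hcore.2 t ht s hs
    have hbase : (1:ℝ) ≤ 1 + b T / γ := le_add_of_nonneg_right (div_nonneg hbT0 hγpos.le)
    have hmono : (1 + b T / γ) ^ t ≤ (1 + b T / γ) ^ T :=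
      pow_le_pow_right₀ hbase (le_of_lt ht)
    rw [hMdef, le_div_iff₀ hγpos]
    have h4 : K * (1 + b T / γ) ^ t ≤ K * (1 + b T / γ) ^ T :=
      mul_le_mul_of_nonneg_left hmono hKnn
    linarith [hb2, hb1]
  -- rounding properties
  have h2npos : ∀ n : ℕ, (0:ℝ) < 2 ^ n := fun n => by positivity
  have hrnd_mem : ∀ n, m₀ ≤ n → ∀ s ∈ pathSpace T a b,
      rnd T a n s ∈ gridSpace T n a b := by
    intro n hm s hs
    refine ⟨⟨by simp [rnd], ?_⟩, ?_⟩
    · intro i h1i hiT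
      have hne' : ¬ i = 0 := by omega
      simp only [rnd, if_neg hne', if_pos hiT]
      obtain ⟨hai, hbi⟩ := hs.2 i h1i hiT
      constructor
      · exact le_max_left _ _
      · apply max_le (le_trans hai hbi)
        rw [div_le_iff₀ (h2npos n)]
        calc ((⌊(2:ℝ) ^ n * s i⌋ : ℝ)) ≤ (2:ℝ) ^ n * s i := Int.floor_le _
        _ = s i * 2 ^ n := by ring
        _ ≤ b i * 2 ^ n := by nlinarith [h2npos n]
    · intro j hj
      by_cases hj0 : j = 0
      · subst hj0
        refine ⟨2 ^ n, ?_⟩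
        simp only [rnd, if_pos rfl]
        push_cast
        rw [div_self (ne_of_gt (h2npos n))]
      · simp only [rnd, if_neg hj0, if_pos hj]
        have h1i : 1 ≤ j := by omega
        obtain ⟨hai, hbi⟩ := hs.2 j h1i hj
        rcases le_total (a j) ((⌊(2:ℝ) ^ n * s j⌋ : ℝ) / 2 ^ n) with h | h
        · have haj0 : 0 ≤ a j := le_trans haT (ha_mono j T hj le_rfl)
          have hq : (0:ℝ) ≤ (⌊(2:ℝ) ^ n * s j⌋ : ℝ) := by
            have h5 : (0:ℝ) ≤ (⌊(2:ℝ) ^ n * s j⌋ : ℝ) / 2 ^ n := le_trans haj0 h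
            have h6 : ((⌊(2:ℝ) ^ n * s j⌋ : ℝ)) =
                ((⌊(2:ℝ) ^ n * s j⌋ : ℝ) / 2 ^ n) * 2 ^ n :=
              (div_mul_cancel₀ _ (ne_of_gt (h2npos n))).symm
            rw [h6]
            exact mul_nonneg h5 (le_of_lt (h2npos n))
          have hfl0 : (0:ℤ) ≤ ⌊(2:ℝ) ^ n * s j⌋ := by exact_mod_cast hq
          refine ⟨(⌊(2:ℝ) ^ n * s j⌋).toNat, ?_⟩
          rw [max_eq_right h]
          congr 1
          exact_mod_cast (Int.toNat_of_nonneg hfl0).symm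
        · rw [max_eq_left h]
          exact (hm₀ n hm).1 j hj
  have hrnd_tend : ∀ s ∈ pathSpace T a b, ∀ j,
      Filter.Tendsto (fun n => rnd T a n s j) Filter.atTop (nhds (s j)) := by
    intro s hs j
    by_cases hj0 : j = 0
    · subst hj0
      simp only [rnd, if_pos rfl]
      rw [hs.1]
      exact tendsto_const_nhds
    · by_cases hjT : j ≤ T
      · have h1i : 1 ≤ j := by omega
        obtain ⟨hai, hbi⟩ := hs.2 j h1i hjT
        simp only [rnd, if_neg hj0, if_pos hjT]
        have hup : ∀ n : ℕ, max (a j) ((⌊(2:ℝ) ^ n * s j⌋ : ℝ) / 2 ^ n) ≤ s j := by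
          intro n
          apply max_le hai
          rw [div_le_iff₀ (h2npos n)]
          calc ((⌊(2:ℝ) ^ n * s j⌋ : ℝ)) ≤ (2:ℝ) ^ n * s j := Int.floor_le _
          _ = s j * 2 ^ n := by ring
        have hlo : ∀ n : ℕ, s j - (2:ℝ)⁻¹ ^ n ≤
            max (a j) ((⌊(2:ℝ) ^ n * s j⌋ : ℝ) / 2 ^ n) := by
          intro n
          apply le_trans ?_ (le_max_right _ _)
          rw [le_div_iff₀ (h2npos n)]
          have h7 : (2:ℝ) ^ n * s j - 1 < (⌊(2:ℝ) ^ n * s j⌋ : ℝ) := Int.sub_one_lt_floor _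
          have h8 : (s j - (2:ℝ)⁻¹ ^ n) * 2 ^ n = 2 ^ n * s j - 1 := by
            rw [inv_pow]
            field_simp
          linarith
        apply tendsto_of_tendsto_of_tendsto_of_le_of_le ?_ ?_ hlo hup
        · have h9 : Filter.Tendsto (fun n : ℕ => (2:ℝ)⁻¹ ^ n) Filter.atTop (nhds 0) :=
            tendsto_pow_atTop_nhds_zero_of_lt_one (by norm_num) (by norm_num)
          have h10 : Filter.Tendsto (fun _ : ℕ => s j) Filter.atTop (nhds (s j)) :=
            tendsto_const_nhds
          simpa using h10.sub h9
        · exact tendsto_const_nhds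
      · simp only [rnd, if_neg hj0, if_neg hjT]
        exact tendsto_const_nhds
  -- limit strategy and position
  set h8 : Fin e → ℝ := fun i => ulim U (fun n => (Hh n).2 i) with hh8def
  set H8 : ℕ → (ℕ → ℝ) → ℝ := fun t s =>
    if t < T then ulim U (fun n => (Hh n).1 t (rnd T a n s)) else 0 with hH8def
  have hhtend : ∀ i, Filter.Tendsto (fun n => (Hh n).2 i) (U : Filter ℕ) (nhds (h8 i)) := by
    intro i
    apply tendsto_ulim U _ 1
    apply hUP.mono
    intro n hp
    have h3 := (hHh n hp).2.2
    have h4 : |(Hh n).2 i| ≤ 1 := by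
      have := norm_le_pi_norm (Hh n).2 i
      rw [h3] at this
      simpa using this
    exact Set.mem_Icc.mpr (abs_le.mp h4)
  have hHtend : ∀ t, t < T → ∀ s ∈ pathSpace T a b,
      Filter.Tendsto (fun n => (Hh n).1 t (rnd T a n s)) (U : Filter ℕ)
        (nhds (H8 t s)) := by
    intro t ht s hs
    have heq : H8 t s = ulim U (fun n => (Hh n).1 t (rnd T a n s)) := by
      rw [hH8def]; simp only [if_pos ht]
    rw [heq]
    apply tendsto_ulim U _ M
    apply hUev.mono
    rintro n ⟨hp, hm⟩
    exact Set.mem_Icc.mpr (abs_le.mp (hM n hp hm t ht (rnd T a n s) (hrnd_mem n hm s hs)))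
  -- adaptedness of the limit
  have hH8ad : AdaptedOn (pathSpace T a b) H8 := by
    intro t s hsmem s' hs'mem hagree
    by_cases ht : t < T
    · have he : ∀ᶠ n in (U : Filter ℕ),
          (Hh n).1 t (rnd T a n s) = (Hh n).1 t (rnd T a n s') := by
        apply hUev.mono
        rintro n ⟨hp, hm⟩
        apply (hHh n hp).1 t _ (hrnd_mem n hm s hsmem) _ (hrnd_mem n hm s' hs'mem)
        intro j hj
        have := hagree j hj
        simp only [rnd, this]
      have t1 := hHtend t ht s hsmem
      have t2 := hHtend t ht s' hs'mem
      exact tendsto_nhds_unique (t1.congr' he) t2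
    · simp only [hH8def, if_neg ht]
  -- the limit position is nontrivial
  have hh8norm : ‖h8‖ = 1 := by
    have t1 : Filter.Tendsto (fun n => (Hh n).2) (U : Filter ℕ) (nhds h8) :=
      tendsto_pi_nhds.mpr hhtend
    have t2 : Filter.Tendsto (fun n => ‖(Hh n).2‖) (U : Filter ℕ) (nhds ‖h8‖) := t1.norm
    have hev1 : (fun _ => (1:ℝ)) =ᶠ[(U : Filter ℕ)] (fun n => ‖(Hh n).2‖) := by
      apply hUP.mono
      intro n hp
      exact ((hHh n hp).2.2).symm
    have t3 : Filter.Tendsto (fun n => ‖(Hh n).2‖) (U : Filter ℕ) (nhds 1) :=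
      Filter.Tendsto.congr' hev1 tendsto_const_nhds
    exact tendsto_nhds_unique t2 t3
  have hh80 : h8 ≠ 0 := by
    intro h0
    rw [h0, norm_zero] at hh8norm
    norm_num at hh8norm
  -- limit superreplication
  have hfinal : ∀ s ∈ pathSpace T a b, 0 ≤ gains T H8 s + ∑ i, h8 i * g s i := by
    intro s hs
    have hev : ∀ᶠ n in (U : Filter ℕ), 0 ≤ gains T (Hh n).1 (rnd T a n s) +
        ∑ i, (Hh n).2 i * (g (rnd T a n s) i - c n i) := by
      apply hUev.mono
      rintro n ⟨hp, hm⟩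
      exact (hHh n hp).2.1 _ (hrnd_mem n hm s hs)
    have hcoordt : ∀ j, Filter.Tendsto (fun n => rnd T a n s j) (U : Filter ℕ)
        (nhds (s j)) := fun j => (hrnd_tend s hs j).mono_left hUatTop
    have hrt : Filter.Tendsto (fun n => rnd T a n s) (U : Filter ℕ) (nhds s) :=
      tendsto_pi_nhds.mpr hcoordt
    have hg : ∀ i, Filter.Tendsto (fun n => g (rnd T a n s) i) (U : Filter ℕ)
        (nhds (g s i)) := fun i => ((hgcont i).tendsto s).comp hrt
    have hcz : ∀ i, Filter.Tendsto (fun n => c n i) (U : Filter ℕ) (nhds 0) := by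
      intro i
      have h1 : Filter.Tendsto (fun n => ‖c n‖) (U : Filter ℕ) (nhds 0) :=
        hc.mono_left hUatTop
      exact squeeze_zero_norm (fun n => norm_le_pi_norm (c n) i) h1
    have hgain : Filter.Tendsto (fun n => gains T (Hh n).1 (rnd T a n s))
        (U : Filter ℕ) (nhds (gains T H8 s)) := by
      unfold gains
      apply tendsto_finset_sum
      intro t htmem
      rw [Finset.mem_range] at htmem
      exact (hHtend t htmem s hs).mul ((hcoordt (t + 1)).sub (hcoordt t))
    have hsum : Filter.Tendsto
        (fun n => ∑ i, (Hh n).2 i * (g (rnd T a n s) i - c n i))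
        (U : Filter ℕ) (nhds (∑ i, h8 i * (g s i - 0))) := by
      apply tendsto_finset_sum
      intro i _
      exact (hhtend i).mul ((hg i).sub (hcz i))
    have := ge_of_tendsto (hgain.add hsum) hev
    simpa using this
  obtain ⟨s, hsmem, hneg⟩ := hAss H8 h8 hH8ad hh80
  have := hfinal s hsmem
  linarith
end
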